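/- arXiv:quant-ph/0505030 — 5 statements merged into one kernel-verified Lean document; each statement's English description precedes it below -/
import Mathlib

section
/- Suppose V, W, Ṽ, W̃ are unitary matrices with ‖V − Ṽ‖ < Δ, ‖W − W̃‖ < Δ, ‖I − V‖ < δ, and ‖I − W‖ < δ. Then ‖VWV†W† − ṼW̃Ṽ†W̃†‖ < 8Δδ + 4Δδ² + 8Δ² + 4Δ³ + Δ⁴. -/
open scoped Matrix.Norms.L2Operator
open Matrix

section aux
variable {d : ℕ}

private lemma unit_norm_le_one (V : Matrix (Fin d) (Fin d) ℂ)
    (hV : V ∈ Matrix.unitaryGroup (Fin d) ℂ) : ‖V‖ ≤ 1 := by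
  have h1 : Vᴴ * V = 1 := by
    have := mem_unitaryGroup_iff'.mp hV
    rwa [star_eq_conjTranspose] at this
  have e1 : ‖(1 : Matrix (Fin d) (Fin d) ℂ)‖ * ‖(1 : Matrix (Fin d) (Fin d) ℂ)‖ =
      ‖(1 : Matrix (Fin d) (Fin d) ℂ)‖ := by
    have := l2_opNorm_conjTranspose_mul_self (1 : Matrix (Fin d) (Fin d) ℂ)
    simpa using this.symm
  have e2 : ‖V‖ * ‖V‖ = ‖(1 : Matrix (Fin d) (Fin d) ℂ)‖ := by
    rw [← h1, l2_opNorm_conjTranspose_mul_self]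
  have e3 : ‖V‖ * ‖V‖ * (‖V‖ * ‖V‖) = ‖V‖ * ‖V‖ := by rw [e2, e1]
  nlinarith [norm_nonneg V, sq_nonneg (‖V‖ * ‖V‖ - 1), sq_nonneg (‖V‖ - 1), sq_nonneg (‖V‖ + 1)]

private lemma mul2_le (A B : Matrix (Fin d) (Fin d) ℂ) (x y : ℝ)
    (hx : ‖A‖ ≤ x) (hy : ‖B‖ ≤ y) : ‖A * B‖ ≤ x * y := by
  have h0 : (0:ℝ) ≤ x := le_trans (norm_nonneg _) hx
  calc ‖A * B‖ ≤ ‖A‖ * ‖B‖ := norm_mul_le _ _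
    _ ≤ x * y := mul_le_mul hx hy (norm_nonneg _) h0

private lemma mul3_le (A B C : Matrix (Fin d) (Fin d) ℂ) (x y z : ℝ)
    (hx : ‖A‖ ≤ x) (hy : ‖B‖ ≤ y) (hz : ‖C‖ ≤ z) : ‖A * B * C‖ ≤ x * y * z := by
  exact mul2_le (A * B) C (x * y) z (mul2_le A B x y hx hy) hz

private lemma mul4_le (A B C D : Matrix (Fin d) (Fin d) ℂ) (x y z w : ℝ)
    (hx : ‖A‖ ≤ x) (hy : ‖B‖ ≤ y) (hz : ‖C‖ ≤ z) (hw : ‖D‖ ≤ w) :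
    ‖A * B * C * D‖ ≤ x * y * z * w := by
  exact mul2_le (A * B * C) D (x * y * z) w (mul3_le A B C x y z hx hy hz) hw

private lemma nsum3 (x1 x2 x3 : Matrix (Fin d) (Fin d) ℂ) :
    ‖x1 + x2 + x3‖ ≤ ‖x1‖ + ‖x2‖ + ‖x3‖ :=
  le_trans (norm_add_le _ _) (add_le_add_left (norm_add_le _ _) _)

private lemma nsum4 (x1 x2 x3 x4 : Matrix (Fin d) (Fin d) ℂ) :
    ‖x1 + x2 + x3 + x4‖ ≤ ‖x1‖ + ‖x2‖ + ‖x3‖ + ‖x4‖ :=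
  le_trans (norm_add_le _ _) (add_le_add_left (nsum3 _ _ _) _)

private lemma nsum5 (x1 x2 x3 x4 x5 : Matrix (Fin d) (Fin d) ℂ) :
    ‖x1 + x2 + x3 + x4 + x5‖ ≤ ‖x1‖ + ‖x2‖ + ‖x3‖ + ‖x4‖ + ‖x5‖ :=
  le_trans (norm_add_le _ _) (add_le_add_left (nsum4 _ _ _ _) _)

private lemma nsum6 (x1 x2 x3 x4 x5 x6 : Matrix (Fin d) (Fin d) ℂ) :
    ‖x1 + x2 + x3 + x4 + x5 + x6‖ ≤ ‖x1‖ + ‖x2‖ + ‖x3‖ + ‖x4‖ + ‖x5‖ + ‖x6‖ :=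
  le_trans (norm_add_le _ _) (add_le_add_left (nsum5 _ _ _ _ _) _)

end aux

set_option maxHeartbeats 1000000 in
theorem group_commutator_approx {d : ℕ}
    (V W V' W' : Matrix (Fin d) (Fin d) ℂ)
    (hV : V ∈ Matrix.unitaryGroup (Fin d) ℂ)
    (hW : W ∈ Matrix.unitaryGroup (Fin d) ℂ)
    (hV' : V' ∈ Matrix.unitaryGroup (Fin d) ℂ)
    (hW' : W' ∈ Matrix.unitaryGroup (Fin d) ℂ)
    (Δ δ : ℝ) (hΔ : 0 < Δ) (hδ : 0 < δ)
    (h1 : ‖V - V'‖ < Δ) (h2 : ‖W - W'‖ < Δ)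
    (h3 : ‖(1 : Matrix (Fin d) (Fin d) ℂ) - V‖ < δ)
    (h4 : ‖(1 : Matrix (Fin d) (Fin d) ℂ) - W‖ < δ) :
    ‖V * W * Vᴴ * Wᴴ - V' * W' * V'ᴴ * W'ᴴ‖ <
      8 * Δ * δ + 4 * Δ * δ ^ 2 + 8 * Δ ^ 2 + 4 * Δ ^ 3 + Δ ^ 4 := by
  set a : Matrix (Fin d) (Fin d) ℂ := V' - V with ha
  set b : Matrix (Fin d) (Fin d) ℂ := W' - W with hb
  have hVV : V * Vᴴ = 1 := by
    have := mem_unitaryGroup_iff.mp hV; rwa [star_eq_conjTranspose] at this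
  have hWW : W * Wᴴ = 1 := by
    have := mem_unitaryGroup_iff.mp hW; rwa [star_eq_conjTranspose] at this
  have hVV' : V' * V'ᴴ = 1 := by
    have := mem_unitaryGroup_iff.mp hV'; rwa [star_eq_conjTranspose] at this
  have hWW' : W' * W'ᴴ = 1 := by
    have := mem_unitaryGroup_iff.mp hW'; rwa [star_eq_conjTranspose] at this
  have eV : V' = V + a := by rw [ha]; abel
  have eW : W' = W + b := by rw [hb]; abel
  have eVH : V'ᴴ = Vᴴ + aᴴ := by rw [ha, conjTranspose_sub]; abel
  have eWH : W'ᴴ = Wᴴ + bᴴ := by rw [hb, conjTranspose_sub]; abel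
  have keyV : a * Vᴴ + V * aᴴ + a * aᴴ = 0 := by
    have h : a * Vᴴ + V * aᴴ + a * aᴴ = V' * V'ᴴ - V * Vᴴ := by
      rw [eVH, eV]; noncomm_ring
    rw [h, hVV', hVV, sub_self]
  have keyW : b * Wᴴ + W * bᴴ + b * bᴴ = 0 := by
    have h : b * Wᴴ + W * bᴴ + b * bᴴ = W' * W'ᴴ - W * Wᴴ := by
      rw [eWH, eW]; noncomm_ring
    rw [h, hWW', hWW, sub_self]
  have main : V * W * Vᴴ * Wᴴ - V' * W' * V'ᴴ * W'ᴴ =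
      -((a * W * Vᴴ + V * W * aᴴ) * Wᴴ
        + V * (b * Vᴴ * Wᴴ + W * Vᴴ * bᴴ)
        + (a * b * Vᴴ * Wᴴ + a * W * aᴴ * Wᴴ + a * W * Vᴴ * bᴴ
           + V * b * aᴴ * Wᴴ + V * b * Vᴴ * bᴴ + V * W * aᴴ * bᴴ)
        + (a * b * aᴴ * Wᴴ + a * b * Vᴴ * bᴴ + a * W * aᴴ * bᴴ + V * b * aᴴ * bᴴ)
        + a * b * aᴴ * bᴴ) := by
    rw [eVH, eWH, eV, eW]; noncomm_ring
  have inner1 : a * W * Vᴴ + V * W * aᴴ =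
      -(a * aᴴ) + a * (W - 1) * Vᴴ + V * (W - 1) * aᴴ := by
    have h : a * W * Vᴴ + V * W * aᴴ =
        (a * Vᴴ + V * aᴴ + a * aᴴ) + (-(a * aᴴ) + a * (W - 1) * Vᴴ + V * (W - 1) * aᴴ) := by
      noncomm_ring
    rw [h, keyV, zero_add]
  have inner2 : b * Vᴴ * Wᴴ + W * Vᴴ * bᴴ =
      -(b * bᴴ) + b * (Vᴴ - 1) * Wᴴ + W * (Vᴴ - 1) * bᴴ := by
    have h : b * Vᴴ * Wᴴ + W * Vᴴ * bᴴ =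
        (b * Wᴴ + W * bᴴ + b * bᴴ) + (-(b * bᴴ) + b * (Vᴴ - 1) * Wᴴ + W * (Vᴴ - 1) * bᴴ) := by
      noncomm_ring
    rw [h, keyW, zero_add]
  -- norm facts
  have nV : ‖V‖ ≤ 1 := unit_norm_le_one V hV
  have nW : ‖W‖ ≤ 1 := unit_norm_le_one W hW
  have nVH : ‖Vᴴ‖ ≤ 1 := by rw [l2_opNorm_conjTranspose]; exact nV
  have nWH : ‖Wᴴ‖ ≤ 1 := by rw [l2_opNorm_conjTranspose]; exact nW
  have na : ‖a‖ ≤ Δ := by rw [ha, norm_sub_rev]; exact le_of_lt h1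
  have nb : ‖b‖ ≤ Δ := by rw [hb, norm_sub_rev]; exact le_of_lt h2
  have naH : ‖aᴴ‖ ≤ Δ := by rw [l2_opNorm_conjTranspose]; exact na
  have nbH : ‖bᴴ‖ ≤ Δ := by rw [l2_opNorm_conjTranspose]; exact nb
  have nWm : ‖W - 1‖ ≤ δ := by rw [norm_sub_rev]; exact le_of_lt h4
  have nVHm : ‖Vᴴ - 1‖ ≤ δ := by
    have h : Vᴴ - 1 = (V - 1)ᴴ := by rw [conjTranspose_sub, conjTranspose_one]
    rw [h, l2_opNorm_conjTranspose, norm_sub_rev]; exact le_of_lt h3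
  -- group 1
  have bnd1 : ‖(a * W * Vᴴ + V * W * aᴴ) * Wᴴ‖ ≤ Δ * Δ + Δ * δ + δ * Δ := by
    have hx : ‖a * W * Vᴴ + V * W * aᴴ‖ ≤ Δ * Δ + Δ * δ * 1 + 1 * δ * Δ := by
      rw [inner1]
      refine le_trans (nsum3 _ _ _) ?_
      have e1 : ‖-(a * aᴴ)‖ ≤ Δ * Δ := by rw [norm_neg]; exact mul2_le _ _ _ _ na naH
      have e2 : ‖a * (W - 1) * Vᴴ‖ ≤ Δ * δ * 1 := mul3_le _ _ _ _ _ _ na nWm nVH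
      have e3 : ‖V * (W - 1) * aᴴ‖ ≤ 1 * δ * Δ := mul3_le _ _ _ _ _ _ nV nWm naH
      linarith
    have := mul2_le (a * W * Vᴴ + V * W * aᴴ) Wᴴ _ 1 hx nWH
    linarith
  have bnd2 : ‖V * (b * Vᴴ * Wᴴ + W * Vᴴ * bᴴ)‖ ≤ Δ * Δ + Δ * δ + δ * Δ := by
    have hx : ‖b * Vᴴ * Wᴴ + W * Vᴴ * bᴴ‖ ≤ Δ * Δ + Δ * δ * 1 + 1 * δ * Δ := by
      rw [inner2]
      refine le_trans (nsum3 _ _ _) ?_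
      have e1 : ‖-(b * bᴴ)‖ ≤ Δ * Δ := by rw [norm_neg]; exact mul2_le _ _ _ _ nb nbH
      have e2 : ‖b * (Vᴴ - 1) * Wᴴ‖ ≤ Δ * δ * 1 := mul3_le _ _ _ _ _ _ nb nVHm nWH
      have e3 : ‖W * (Vᴴ - 1) * bᴴ‖ ≤ 1 * δ * Δ := mul3_le _ _ _ _ _ _ nW nVHm nbH
      linarith
    have := mul2_le V (b * Vᴴ * Wᴴ + W * Vᴴ * bᴴ) 1 _ nV hx
    linarith
  -- group 3: second order
  have bnd3 : ‖a * b * Vᴴ * Wᴴ + a * W * aᴴ * Wᴴ + a * W * Vᴴ * bᴴ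
      + V * b * aᴴ * Wᴴ + V * b * Vᴴ * bᴴ + V * W * aᴴ * bᴴ‖ ≤ 6 * (Δ * Δ) := by
    refine le_trans (nsum6 _ _ _ _ _ _) ?_
    have t1 : ‖a * b * Vᴴ * Wᴴ‖ ≤ Δ * Δ * 1 * 1 := mul4_le _ _ _ _ _ _ _ _ na nb nVH nWH
    have t2 : ‖a * W * aᴴ * Wᴴ‖ ≤ Δ * 1 * Δ * 1 := mul4_le _ _ _ _ _ _ _ _ na nW naH nWH
    have t3 : ‖a * W * Vᴴ * bᴴ‖ ≤ Δ * 1 * 1 * Δ := mul4_le _ _ _ _ _ _ _ _ na nW nVH nbH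
    have t4 : ‖V * b * aᴴ * Wᴴ‖ ≤ 1 * Δ * Δ * 1 := mul4_le _ _ _ _ _ _ _ _ nV nb naH nWH
    have t5 : ‖V * b * Vᴴ * bᴴ‖ ≤ 1 * Δ * 1 * Δ := mul4_le _ _ _ _ _ _ _ _ nV nb nVH nbH
    have t6 : ‖V * W * aᴴ * bᴴ‖ ≤ 1 * 1 * Δ * Δ := mul4_le _ _ _ _ _ _ _ _ nV nW naH nbH
    linarith
  -- group 4: third order
  have bnd4 : ‖a * b * aᴴ * Wᴴ + a * b * Vᴴ * bᴴ + a * W * aᴴ * bᴴ + V * b * aᴴ * bᴴ‖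
      ≤ 4 * (Δ * Δ * Δ) := by
    refine le_trans (nsum4 _ _ _ _) ?_
    have u1 : ‖a * b * aᴴ * Wᴴ‖ ≤ Δ * Δ * Δ * 1 := mul4_le _ _ _ _ _ _ _ _ na nb naH nWH
    have u2 : ‖a * b * Vᴴ * bᴴ‖ ≤ Δ * Δ * 1 * Δ := mul4_le _ _ _ _ _ _ _ _ na nb nVH nbH
    have u3 : ‖a * W * aᴴ * bᴴ‖ ≤ Δ * 1 * Δ * Δ := mul4_le _ _ _ _ _ _ _ _ na nW naH nbH
    have u4 : ‖V * b * aᴴ * bᴴ‖ ≤ 1 * Δ * Δ * Δ := mul4_le _ _ _ _ _ _ _ _ nV nb naH nbH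
    linarith
  have bnd5 : ‖a * b * aᴴ * bᴴ‖ ≤ Δ * Δ * Δ * Δ := mul4_le _ _ _ _ _ _ _ _ na nb naH nbH
  rw [main, norm_neg]
  refine lt_of_le_of_lt (nsum5 _ _ _ _ _) ?_
  nlinarith [bnd1, bnd2, bnd3, bnd4, bnd5, mul_pos hΔ hδ, mul_pos (mul_pos hΔ hδ) hδ]
end

section
/- Let H be a traceless d×d Hermitian matrix. Then there exist Hermitian matrices F and G such that [F,G] = iH and ‖F‖, ‖G‖ ≤ d^{1/4} · ((d−1)/2)^{1/2} · √‖H‖. -/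
open scoped Matrix.Norms.L2Operator
open Matrix Complex

namespace CommAux


variable {d : ℕ}

lemma opNorm_le_of_mulVec (A : Matrix (Fin d) (Fin d) ℂ) {c : ℝ} (hc : 0 ≤ c)
    (h : ∀ x : EuclideanSpace ℂ (Fin d),
      ‖(EuclideanSpace.equiv (Fin d) ℂ).symm (A *ᵥ x)‖ ≤ c * ‖x‖) : ‖A‖ ≤ c := by
  rw [Matrix.l2_opNorm_def]
  exact ContinuousLinearMap.opNorm_le_bound _ hc (fun x => h x)

lemma norm_diagonal_le (v : Fin d → ℂ) {c : ℝ} (hc : 0 ≤ c) (h : ∀ i, ‖v i‖ ≤ c) :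
    ‖diagonal v‖ ≤ c := by
  apply opNorm_le_of_mulVec _ hc
  intro x
  rw [EuclideanSpace.norm_eq, EuclideanSpace.norm_eq]
  have h1 : ∀ i, ‖(diagonal v *ᵥ (x : Fin d → ℂ)) i‖ ^ 2 ≤ c ^ 2 * ‖(x : Fin d → ℂ) i‖ ^ 2 := by
    intro i
    rw [Matrix.mulVec_diagonal, norm_mul, mul_pow]
    have := h i
    have h0 : 0 ≤ ‖v i‖ := norm_nonneg _
    exact mul_le_mul_of_nonneg_right (pow_le_pow_left₀ h0 this 2) (sq_nonneg _)
  calc Real.sqrt (∑ i, ‖(diagonal v *ᵥ (x : Fin d → ℂ)) i‖ ^ 2)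
      ≤ Real.sqrt (∑ i, c ^ 2 * ‖(x : Fin d → ℂ) i‖ ^ 2) :=
        Real.sqrt_le_sqrt (Finset.sum_le_sum fun i _ => h1 i)
    _ = c * Real.sqrt (∑ i, ‖(x : Fin d → ℂ) i‖ ^ 2) := by
        rw [← Finset.mul_sum, Real.sqrt_mul (sq_nonneg c), Real.sqrt_sq hc]

lemma opNorm_le_frobenius (A : Matrix (Fin d) (Fin d) ℂ) :
    ‖A‖ ≤ Real.sqrt (∑ j, ∑ k, ‖A j k‖ ^ 2) := by
  apply opNorm_le_of_mulVec _ (Real.sqrt_nonneg _)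
  intro x
  rw [EuclideanSpace.norm_eq, EuclideanSpace.norm_eq, ← Real.sqrt_mul (by positivity)]
  apply Real.sqrt_le_sqrt
  rw [Finset.sum_mul]
  apply Finset.sum_le_sum
  intro j _
  have h1 : ‖(A *ᵥ (x : Fin d → ℂ)) j‖ ≤ ∑ k, ‖A j k‖ * ‖(x : Fin d → ℂ) k‖ := by
    simp only [Matrix.mulVec, dotProduct]
    refine (norm_sum_le _ _).trans (le_of_eq ?_)
    simp [norm_mul]
  calc ‖(A *ᵥ (x : Fin d → ℂ)) j‖ ^ 2 ≤ (∑ k, ‖A j k‖ * ‖(x : Fin d → ℂ) k‖) ^ 2 := by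
        exact pow_le_pow_left₀ (norm_nonneg _) h1 2
    _ ≤ (∑ k, ‖A j k‖ ^ 2) * ∑ k, ‖(x : Fin d → ℂ) k‖ ^ 2 :=
        Finset.sum_mul_sq_le_sq_mul_sq _ _ _



variable {d : ℕ}

noncomputable def om (d : ℕ) : ℂ := Complex.exp (2 * Real.pi * Complex.I / d)

noncomputable def Wm (d : ℕ) : Matrix (Fin d) (Fin d) ℂ :=
  fun j k => (Real.sqrt d : ℂ)⁻¹ * om d ^ ((j : ℕ) * (k : ℕ))

lemma om_ne_zero : om d ≠ 0 := Complex.exp_ne_zero _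

lemma conj_om : (starRingEnd ℂ) (om d) = (om d)⁻¹ := by
  rw [om, ← Complex.exp_conj, ← Complex.exp_neg]
  congr 1
  simp only [map_div₀, _root_.map_mul, Complex.conj_I, Complex.conj_ofReal, map_ofNat, map_natCast]
  ring

lemma not_dvd_sub (j k : Fin d) (hjk : j ≠ k) : ¬ ((d : ℤ) ∣ ((k : ℤ) - (j : ℤ))) := by
  intro hdvd
  have ht : ((k : ℤ) - (j : ℤ)).natAbs < d := by omega
  have h0 : ((k : ℤ) - (j : ℤ)) ≠ 0 := by
    intro h
    apply hjk
    have : (j : ℤ) = (k : ℤ) := by omega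
    exact Fin.ext (by exact_mod_cast this)
  have := Nat.le_of_dvd (Int.natAbs_pos.mpr h0) (Int.natAbs_dvd_natAbs.mpr hdvd)
  omega

lemma sum_om_pow (hd : 0 < d) (t : ℤ) :
    ∑ m : Fin d, (om d ^ t) ^ (m : ℕ) = if (d : ℤ) ∣ t then (d : ℂ) else 0 := by
  have hprim : IsPrimitiveRoot (om d) d := Complex.isPrimitiveRoot_exp d hd.ne'
  rw [Fin.sum_univ_eq_sum_range (fun m => (om d ^ t) ^ m) d]
  by_cases hdvd : (d : ℤ) ∣ t
  · rw [(hprim.zpow_eq_one_iff_dvd t).2 hdvd]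
    simp only [one_pow, Finset.sum_const, Finset.card_range, nsmul_eq_mul, mul_one, if_pos hdvd]
  · have hne : om d ^ t ≠ 1 := fun h => hdvd ((hprim.zpow_eq_one_iff_dvd t).1 h)
    rw [geom_sum_eq hne]
    have hone : (om d ^ t) ^ d = 1 := by
      rw [← zpow_natCast (om d ^ t) d, ← _root_.zpow_mul, mul_comm, _root_.zpow_mul, hprim.zpow_eq_one, _root_.one_zpow]
    rw [hone]
    simp [hdvd]

lemma conj_Wm_mul_Wm (m j k : Fin d) :
    (starRingEnd ℂ) (Wm d m j) * Wm d m k =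
      ((Real.sqrt d : ℂ))⁻¹ ^ 2 * (om d ^ ((k : ℤ) - (j : ℤ))) ^ (m : ℕ) := by
  unfold Wm
  rw [_root_.map_mul, map_pow, map_inv₀, Complex.conj_ofReal, conj_om]
  have h1 : ((om d)⁻¹) ^ ((m : ℕ) * (j : ℕ)) * ((Real.sqrt d : ℂ))⁻¹ *
      ((Real.sqrt d : ℂ)⁻¹ * om d ^ ((m : ℕ) * (k : ℕ))) =
      ((Real.sqrt d : ℂ))⁻¹ ^ 2 * (((om d)⁻¹) ^ ((m : ℕ) * (j : ℕ)) *
        om d ^ ((m : ℕ) * (k : ℕ))) := by ring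
  rw [mul_comm ((Real.sqrt d : ℂ))⁻¹ _, h1]
  congr 1
  rw [inv_pow, ← zpow_natCast (om d) ((m : ℕ) * (j : ℕ)), ← zpow_natCast (om d) ((m : ℕ) * (k : ℕ)),
    ← _root_.zpow_neg, ← zpow_add₀ om_ne_zero]
  rw [← zpow_natCast (om d ^ ((k : ℤ) - (j : ℤ))) (m : ℕ), ← _root_.zpow_mul]
  congr 1
  push_cast
  ring

lemma Wm_conjTranspose_mul_self (hd : 0 < d) : (Wm d)ᴴ * Wm d = 1 := by
  ext j k
  rw [Matrix.mul_apply, Matrix.one_apply]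
  simp only [Matrix.conjTranspose_apply, Matrix.star_apply, RCLike.star_def]
  calc (∑ m, (starRingEnd ℂ) (Wm d m j) * Wm d m k)
      = ∑ m : Fin d, ((Real.sqrt d : ℂ))⁻¹ ^ 2 * (om d ^ ((k : ℤ) - (j : ℤ))) ^ (m : ℕ) := by
        exact Finset.sum_congr rfl fun m _ => conj_Wm_mul_Wm m j k
    _ = ((Real.sqrt d : ℂ))⁻¹ ^ 2 * ∑ m : Fin d, (om d ^ ((k : ℤ) - (j : ℤ))) ^ (m : ℕ) := by
        rw [Finset.mul_sum]
    _ = if j = k then 1 else 0 := by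
        rw [sum_om_pow hd]
        by_cases hjk : j = k
        · subst hjk
          simp only [sub_self, dvd_refl, if_pos, if_true]
          rw [inv_pow, ← Complex.ofReal_pow, Real.sq_sqrt (Nat.cast_nonneg d)]
          rw [Complex.ofReal_natCast]
          rw [if_pos (dvd_zero _), inv_mul_cancel₀ (by exact_mod_cast hd.ne' : (d:ℂ) ≠ 0)]
        · rw [if_neg hjk, if_neg (not_dvd_sub j k hjk), mul_zero]

lemma Wm_mul_conjTranspose_self (hd : 0 < d) : Wm d * (Wm d)ᴴ = 1 :=
  mul_eq_one_comm.mp (Wm_conjTranspose_mul_self hd)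



variable {d : ℕ}

lemma norm_one_le : ‖(1 : Matrix (Fin d) (Fin d) ℂ)‖ ≤ 1 := by
  apply opNorm_le_of_mulVec _ zero_le_one
  intro x
  rw [Matrix.one_mulVec, one_mul]
  rfl

lemma norm_le_one_of_unitary (Q : Matrix (Fin d) (Fin d) ℂ) (hQ : Qᴴ * Q = 1) : ‖Q‖ ≤ 1 := by
  have h2 : ‖Q‖ * ‖Q‖ ≤ 1 := by
    rw [← Matrix.l2_opNorm_conjTranspose_mul_self, hQ]
    exact norm_one_le
  nlinarith [norm_nonneg Q]

lemma abs_le_norm_diagonal (v : Fin d → ℝ) (i : Fin d) :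
    |v i| ≤ ‖(diagonal (fun j => ((v j : ℝ) : ℂ)) : Matrix (Fin d) (Fin d) ℂ)‖ := by
  have key := Matrix.l2_opNorm_mulVec (diagonal (fun j => ((v j : ℝ) : ℂ)))
    (EuclideanSpace.single i (1 : ℂ))
  have h1 : (EuclideanSpace.equiv (Fin d) ℂ).symm
      ((diagonal (fun j => ((v j : ℝ) : ℂ))) *ᵥ (EuclideanSpace.single i (1 : ℂ)))
      = EuclideanSpace.single i ((v i : ℂ)) := by
    ext j
    rw [show ((EuclideanSpace.equiv (Fin d) ℂ).symm ((diagonal fun j => ((v j : ℝ) : ℂ)) *ᵥ EuclideanSpace.single i (1:ℂ))) j = ((diagonal fun j => ((v j : ℝ) : ℂ)) *ᵥ EuclideanSpace.single i (1:ℂ)) j from rfl, Matrix.mulVec_diagonal]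
    by_cases hji : j = i
    · subst hji; simp [EuclideanSpace.single_apply]
    · simp [EuclideanSpace.single_apply, hji]
  rw [h1, EuclideanSpace.norm_single, EuclideanSpace.norm_single] at key
  simpa [Complex.norm_real] using key



variable {d : ℕ}

set_option maxHeartbeats 2000000 in
theorem main {d : ℕ} (hd : 2 ≤ d)
    (H : Matrix (Fin d) (Fin d) ℂ) (hH : H.IsHermitian)
    (htr : Matrix.trace H = 0) :
    ∃ F G : Matrix (Fin d) (Fin d) ℂ, F.IsHermitian ∧ G.IsHermitian ∧
      ⁅F, G⁆ = Complex.I • H ∧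
      ‖F‖ ≤ (d : ℝ) ^ ((1 : ℝ) / 4) * (((d : ℝ) - 1) / 2) ^ ((1 : ℝ) / 2) * Real.sqrt ‖H‖ ∧
      ‖G‖ ≤ (d : ℝ) ^ ((1 : ℝ) / 4) * (((d : ℝ) - 1) / 2) ^ ((1 : ℝ) / 2) * Real.sqrt ‖H‖ := by
  classical
  have hd0 : 0 < d := by omega
  have hdR : (2 : ℝ) ≤ (d : ℝ) := by exact_mod_cast hd
  have hd1R : (0 : ℝ) < (d : ℝ) - 1 := by linarith
  set B : ℝ := (d : ℝ) ^ ((1 : ℝ) / 4) * (((d : ℝ) - 1) / 2) ^ ((1 : ℝ) / 2) * Real.sqrt ‖H‖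
    with hBdef
  have hBnn : 0 ≤ B := by
    apply mul_nonneg (mul_nonneg ?_ ?_) (Real.sqrt_nonneg _)
    · exact Real.rpow_nonneg (Nat.cast_nonneg d) _
    · exact Real.rpow_nonneg (by linarith) _
  by_cases hH0 : H = 0
  · refine ⟨0, 0, Matrix.isHermitian_zero, Matrix.isHermitian_zero, by simp [hH0, Ring.lie_def], ?_, ?_⟩ <;>
      simpa using hBnn
  set n : ℝ := ‖H‖ with hndef
  have hn : 0 < n := by rw [hndef]; exact norm_pos_iff.mpr hH0
  have hB2 : B ^ 2 = Real.sqrt d * (((d : ℝ) - 1) / 2) * n := by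
    have h1 : ((d : ℝ) ^ ((1 : ℝ) / 4)) ^ 2 = Real.sqrt d := by
      rw [← Real.rpow_natCast ((d : ℝ) ^ ((1 : ℝ) / 4)) 2,
        ← Real.rpow_mul (Nat.cast_nonneg d), Real.sqrt_eq_rpow]
      norm_num
    have h2 : ((((d : ℝ) - 1) / 2) ^ ((1 : ℝ) / 2)) ^ 2 = ((d : ℝ) - 1) / 2 := by
      rw [← Real.rpow_natCast ((((d : ℝ) - 1) / 2) ^ ((1 : ℝ) / 2)) 2,
        ← Real.rpow_mul (by linarith)]
      norm_num
    have h3 : Real.sqrt n ^ 2 = n := Real.sq_sqrt hn.le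
    rw [hBdef, mul_pow, mul_pow, h1, h2, h3]
  -- spectral decomposition
  set U : Matrix (Fin d) (Fin d) ℂ := (hH.eigenvectorUnitary : Matrix (Fin d) (Fin d) ℂ)
    with hUdef
  have hU1 : Uᴴ * U = 1 := by
    rw [← Matrix.star_eq_conjTranspose]
    exact (Matrix.mem_unitaryGroup_iff').mp hH.eigenvectorUnitary.2
  have hU2 : U * Uᴴ = 1 := by
    rw [← Matrix.star_eq_conjTranspose]
    exact (Matrix.mem_unitaryGroup_iff).mp hH.eigenvectorUnitary.2
  set lam : Fin d → ℝ := hH.eigenvalues with hlamdef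
  set D : Matrix (Fin d) (Fin d) ℂ := diagonal (fun m => ((lam m : ℝ) : ℂ)) with hDdef
  have hspec : H = U * D * Uᴴ := by
    have h := hH.spectral_theorem
    rw [Unitary.conjStarAlgAut_apply] at h
    rw [← Matrix.star_eq_conjTranspose]
    exact h
  have htrD : Matrix.trace D = 0 := by
    calc Matrix.trace D = Matrix.trace (Uᴴ * U * D) := by rw [hU1, one_mul]
      _ = Matrix.trace (U * D * Uᴴ) := (Matrix.trace_mul_cycle U D Uᴴ).symm
      _ = 0 := by rw [← hspec]; exact htr
  have hsum : ∑ m, lam m = 0 := by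
    have h : ((∑ m, lam m : ℝ) : ℂ) = 0 := by
      push_cast
      rw [show (∑ m, ((lam m : ℝ) : ℂ)) = Matrix.trace D from (Matrix.trace_diagonal _).symm]
      exact htrD
    exact_mod_cast h
  have conj_norm_le : ∀ (Q A : Matrix (Fin d) (Fin d) ℂ), Qᴴ * Q = 1 → Q * Qᴴ = 1 →
      ‖Q * A * Qᴴ‖ ≤ ‖A‖ := by
    intro Q A h1 h2
    have hQn : ‖Q‖ ≤ 1 := norm_le_one_of_unitary Q h1
    have hQn2 : ‖Qᴴ‖ ≤ 1 := by
      apply norm_le_one_of_unitary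
      rwa [Matrix.conjTranspose_conjTranspose]
    calc ‖Q * A * Qᴴ‖ ≤ ‖Q * A‖ * ‖Qᴴ‖ := Matrix.l2_opNorm_mul _ _
      _ ≤ (‖Q‖ * ‖A‖) * ‖Qᴴ‖ := by
          apply mul_le_mul_of_nonneg_right (Matrix.l2_opNorm_mul _ _) (norm_nonneg _)
      _ ≤ (1 * ‖A‖) * 1 := by
          apply mul_le_mul (mul_le_mul_of_nonneg_right hQn (norm_nonneg _)) hQn2
            (norm_nonneg _) (by positivity)
      _ = ‖A‖ := by ring
  have hDeq : Uᴴ * H * U = D := by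
    rw [hspec]
    calc Uᴴ * (U * D * Uᴴ) * U = (Uᴴ * U) * D * (Uᴴ * U) := by
          simp only [Matrix.mul_assoc]
      _ = D := by rw [hU1, one_mul, mul_one]
  have hDle : ‖D‖ ≤ n := by
    have h := conj_norm_le Uᴴ H (by rw [Matrix.conjTranspose_conjTranspose]; exact hU2)
      (by rw [Matrix.conjTranspose_conjTranspose]; exact hU1)
    rw [Matrix.conjTranspose_conjTranspose, hDeq] at h
    exact h
  have hlam : ∀ m, |lam m| ≤ n := fun m => (abs_le_norm_diagonal lam m).trans hDle
  -- Fourier conjugation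
  set W : Matrix (Fin d) (Fin d) ℂ := Wm d with hWdef
  have hW1 : Wᴴ * W = 1 := Wm_conjTranspose_mul_self hd0
  have hW2 : W * Wᴴ = 1 := Wm_mul_conjTranspose_self hd0
  set Q : Matrix (Fin d) (Fin d) ℂ := U * W with hQdef
  have hQ1 : Qᴴ * Q = 1 := by
    rw [hQdef, Matrix.conjTranspose_mul]
    calc Wᴴ * Uᴴ * (U * W) = Wᴴ * ((Uᴴ * U) * W) := by simp only [Matrix.mul_assoc]
      _ = 1 := by rw [hU1, one_mul, hW1]
  have hQ2 : Q * Qᴴ = 1 := by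
    rw [hQdef, Matrix.conjTranspose_mul]
    calc U * W * (Wᴴ * Uᴴ) = U * ((W * Wᴴ) * Uᴴ) := by simp only [Matrix.mul_assoc]
      _ = 1 := by rw [hW2, one_mul, hU2]
  set M : Matrix (Fin d) (Fin d) ℂ := Wᴴ * D * W with hMdef
  have hQMQ : Q * M * Qᴴ = H := by
    rw [hQdef, hMdef, Matrix.conjTranspose_mul]
    calc U * W * (Wᴴ * D * W) * (Wᴴ * Uᴴ)
        = U * ((W * Wᴴ) * (D * ((W * Wᴴ) * Uᴴ))) := by simp only [Matrix.mul_assoc]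
      _ = U * (D * Uᴴ) := by rw [hW2, one_mul, one_mul]
      _ = U * D * Uᴴ := by rw [Matrix.mul_assoc]
      _ = H := hspec.symm
  have hDH : Dᴴ = D := by
    rw [hDdef, Matrix.diagonal_conjTranspose]
    congr 1
    funext i
    simp [Pi.star_def, Complex.conj_ofReal]
  have hMH : Mᴴ = M := by
    rw [hMdef, Matrix.conjTranspose_mul, Matrix.conjTranspose_mul,
      Matrix.conjTranspose_conjTranspose, hDH, Matrix.mul_assoc]
  have hr2 : ((Real.sqrt d : ℂ))⁻¹ ^ 2 = ((d : ℝ) : ℂ)⁻¹ := by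
    rw [inv_pow, ← Complex.ofReal_pow, Real.sq_sqrt (Nat.cast_nonneg d)]
  have hMdiag : ∀ j, M j j = 0 := by
    intro j
    rw [hMdef, Matrix.mul_apply]
    have hterm : ∀ m : Fin d, (Wᴴ * D) j m * W m j = ((d : ℝ) : ℂ)⁻¹ * (lam m : ℂ) := by
      intro m
      rw [hDdef, Matrix.mul_diagonal, Matrix.conjTranspose_apply]
      have h := conj_Wm_mul_Wm m j j
      rw [sub_self, zpow_zero, one_pow, mul_one] at h
      calc (starRingEnd ℂ) (W m j) * (lam m : ℂ) * W m j
          = ((starRingEnd ℂ) (W m j) * W m j) * (lam m : ℂ) := by ring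
        _ = ((d : ℝ) : ℂ)⁻¹ * (lam m : ℂ) := by rw [hWdef, h, hr2]
    rw [Finset.sum_congr rfl (fun m _ => hterm m), ← Finset.mul_sum]
    have : (∑ m, ((lam m : ℝ) : ℂ)) = 0 := by
      rw [← Complex.ofReal_sum]
      exact_mod_cast congrArg (Complex.ofReal) hsum
    rw [this, mul_zero]
  -- Frobenius norm of M
  have hzz : ∀ z : ℂ, (starRingEnd ℂ) z * z = ((‖z‖ ^ 2 : ℝ) : ℂ) := by
    intro z
    rw [mul_comm, Complex.mul_conj, Complex.normSq_eq_norm_sq]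
    try push_cast
    try ring
  have htrMM : Matrix.trace (Mᴴ * M) = ((∑ m, (lam m) ^ 2 : ℝ) : ℂ) := by
    have hMM : Mᴴ * M = Wᴴ * (D * (D * W)) := by
      rw [hMH, hMdef]
      calc Wᴴ * D * W * (Wᴴ * D * W) = Wᴴ * (D * ((W * Wᴴ) * (D * W))) := by
            simp only [Matrix.mul_assoc]
        _ = Wᴴ * (D * (D * W)) := by rw [hW2, one_mul]
    rw [hMM, Matrix.trace_mul_comm]
    have : D * (D * W) * Wᴴ = D * D * (W * Wᴴ) := by simp only [Matrix.mul_assoc]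
    rw [this, hW2, mul_one, hDdef, Matrix.diagonal_mul_diagonal, Matrix.trace_diagonal]
    push_cast
    try ring
  have hfrobR : ∑ j, ∑ k, ‖M j k‖ ^ 2 = ∑ m, (lam m) ^ 2 := by
    have h1 : Matrix.trace (Mᴴ * M) = ∑ j, ∑ k, ((‖M k j‖ ^ 2 : ℝ) : ℂ) := by
      rw [Matrix.trace]
      simp only [Matrix.diag_apply, Matrix.mul_apply, Matrix.conjTranspose_apply,
        Matrix.star_apply, RCLike.star_def]
      exact Finset.sum_congr rfl fun j _ => Finset.sum_congr rfl fun k _ => hzz (M k j)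
    have h2 : ((∑ j, ∑ k, ‖M k j‖ ^ 2 : ℝ) : ℂ) = ((∑ m, (lam m) ^ 2 : ℝ) : ℂ) := by
      calc ((∑ j, ∑ k, ‖M k j‖ ^ 2 : ℝ) : ℂ) = ∑ j, ∑ k, ((‖M k j‖ ^ 2 : ℝ) : ℂ) := by
            rw [Complex.ofReal_sum]
            exact Finset.sum_congr rfl fun j _ => Complex.ofReal_sum _ _
        _ = Matrix.trace (Mᴴ * M) := h1.symm
        _ = ((∑ m, (lam m) ^ 2 : ℝ) : ℂ) := htrMM
    have h3 : ∑ j, ∑ k, ‖M k j‖ ^ 2 = ∑ m, (lam m) ^ 2 := by exact_mod_cast h2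
    rw [← h3, Finset.sum_comm]
  have hMsum : ∑ j, ∑ k, ‖M j k‖ ^ 2 ≤ (d : ℝ) * n ^ 2 := by
    rw [hfrobR]
    calc ∑ m, (lam m) ^ 2 ≤ ∑ _m : Fin d, n ^ 2 := by
          apply Finset.sum_le_sum
          intro m _
          have h := hlam m
          have := abs_le.mp h
          nlinarith [this.1, this.2]
      _ = (d : ℝ) * n ^ 2 := by
          rw [Finset.sum_const, Finset.card_univ, Fintype.card_fin, nsmul_eq_mul]
  -- the construction
  have hsd : 0 < Real.sqrt d := Real.sqrt_pos.mpr (by positivity)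
  set c : ℝ := Real.sqrt (2 * Real.sqrt d * n / ((d : ℝ) - 1)) with hcdef
  have hc : 0 < c := Real.sqrt_pos.mpr (by positivity)
  have hc2 : c ^ 2 = 2 * Real.sqrt d * n / ((d : ℝ) - 1) := Real.sq_sqrt (by positivity)
  set F0 : Matrix (Fin d) (Fin d) ℂ :=
    diagonal (fun j => ((c * ((j : ℝ) - ((d : ℝ) - 1) / 2) : ℝ) : ℂ)) with hF0def
  set G0 : Matrix (Fin d) (Fin d) ℂ :=
    Matrix.of (fun j k => if j = k then 0 else
      Complex.I * M j k / ((c : ℂ) * (((j : ℕ) : ℂ) - ((k : ℕ) : ℂ)))) with hG0def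
  have hsub_ne : ∀ {j k : Fin d}, j ≠ k → (((j : ℕ) : ℂ) - ((k : ℕ) : ℂ)) ≠ 0 := by
    intro j k hjk h
    apply hjk
    have h2 : ((j : ℕ) : ℂ) = ((k : ℕ) : ℂ) := by linear_combination h
    have h3 : (j : ℕ) = (k : ℕ) := by exact_mod_cast h2
    exact Fin.ext h3
  have hcC : ((c : ℝ) : ℂ) ≠ 0 := by exact_mod_cast hc.ne'
  have hF0H : F0.IsHermitian := by
    rw [Matrix.IsHermitian, hF0def, Matrix.diagonal_conjTranspose]
    congr 1
    funext i
    simp [Pi.star_def, Complex.conj_ofReal]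
  have hG0H : G0.IsHermitian := by
    rw [Matrix.IsHermitian]
    ext j k
    rw [Matrix.conjTranspose_apply, hG0def]
    simp only [Matrix.of_apply]
    by_cases hjk : j = k
    · subst hjk
      simp
    · rw [if_neg (Ne.symm hjk), if_neg hjk]
      have hMjk : (starRingEnd ℂ) (M k j) = M j k := by
        have := congrFun (congrFun hMH j) k
        rw [Matrix.conjTranspose_apply] at this
        exact this
      have hden : ((c : ℝ) : ℂ) * (((k : ℕ) : ℂ) - ((j : ℕ) : ℂ))
          = -(((c : ℝ) : ℂ) * (((j : ℕ) : ℂ) - ((k : ℕ) : ℂ))) := by ring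
      rw [Complex.star_def, map_div₀, _root_.map_mul, _root_.map_mul, Complex.conj_I,
        Complex.conj_ofReal, map_sub, map_natCast, map_natCast, hMjk, hden, div_neg, neg_mul,
        neg_div, neg_neg]
  have hcomm0 : F0 * G0 - G0 * F0 = Complex.I • M := by
    ext j k
    rw [Matrix.sub_apply, Matrix.smul_apply, smul_eq_mul, hF0def, hG0def,
      Matrix.diagonal_mul, Matrix.mul_diagonal]
    simp only [Matrix.of_apply]
    by_cases hjk : j = k
    · subst hjk
      simp [hMdiag j]
    · rw [if_neg hjk]
      have hne : (((j : ℕ) : ℂ) - ((k : ℕ) : ℂ)) ≠ 0 := hsub_ne hjk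
      push_cast
      field_simp
      ring
  set F : Matrix (Fin d) (Fin d) ℂ := Q * F0 * Qᴴ with hFdef
  set G : Matrix (Fin d) (Fin d) ℂ := Q * G0 * Qᴴ with hGdef
  have hconjHerm : ∀ (A : Matrix (Fin d) (Fin d) ℂ), A.IsHermitian →
      (Q * A * Qᴴ).IsHermitian := by
    intro A hA
    rw [Matrix.IsHermitian]
    simp only [Matrix.conjTranspose_mul, Matrix.conjTranspose_conjTranspose, hA.eq,
      Matrix.mul_assoc]
  have hmulQ : ∀ A B : Matrix (Fin d) (Fin d) ℂ,
      (Q * A * Qᴴ) * (Q * B * Qᴴ) = Q * (A * B) * Qᴴ := by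
    intro A B
    calc (Q * A * Qᴴ) * (Q * B * Qᴴ) = Q * (A * ((Qᴴ * Q) * (B * Qᴴ))) := by
          simp only [Matrix.mul_assoc]
      _ = Q * (A * (B * Qᴴ)) := by rw [hQ1, one_mul]
      _ = Q * (A * B) * Qᴴ := by simp only [Matrix.mul_assoc]
  have hcommFG : ⁅F, G⁆ = Complex.I • H := by
    rw [Ring.lie_def, hFdef, hGdef, hmulQ, hmulQ, ← Matrix.sub_mul, ← Matrix.mul_sub,
      hcomm0, Matrix.mul_smul, Matrix.smul_mul, hQMQ]
  -- norm of F
  have hF0norm : ‖F0‖ ≤ c * (((d : ℝ) - 1) / 2) := by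
    rw [hF0def]
    apply norm_diagonal_le _ (by positivity)
    intro j
    rw [Complex.norm_real, Real.norm_eq_abs, abs_mul, abs_of_pos hc]
    apply mul_le_mul_of_nonneg_left _ hc.le
    rw [abs_le]
    have hj1 : (0 : ℝ) ≤ (j : ℝ) := Nat.cast_nonneg _
    have hj2 : (j : ℝ) ≤ (d : ℝ) - 1 := by
      have := j.isLt
      have : ((j : ℕ) : ℝ) + 1 ≤ (d : ℝ) := by exact_mod_cast this
      linarith
    constructor <;> linarith
  have hcB : c * (((d : ℝ) - 1) / 2) ≤ B := by
    have hsq : (c * (((d : ℝ) - 1) / 2)) ^ 2 = B ^ 2 := by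
      rw [mul_pow, hc2, hB2]
      field_simp
    have h := Real.sqrt_le_sqrt (le_of_eq hsq)
    rwa [Real.sqrt_sq (by positivity), Real.sqrt_sq hBnn] at h
  have hFnorm : ‖F‖ ≤ B := by
    rw [hFdef]
    exact (conj_norm_le Q F0 hQ1 hQ2).trans (hF0norm.trans hcB)
  -- norm of G
  have hG0entry : ∀ j k, ‖G0 j k‖ ^ 2 ≤ ‖M j k‖ ^ 2 / c ^ 2 := by
    intro j k
    rw [hG0def]
    simp only [Matrix.of_apply]
    by_cases hjk : j = k
    · rw [if_pos hjk, norm_zero]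
      have h0 : (0:ℝ) ≤ ‖M j k‖ ^ 2 / c ^ 2 := by positivity
      nlinarith [h0]
    · rw [if_neg hjk]
      have hge1 : (1 : ℝ) ≤ ‖((j : ℕ) : ℂ) - ((k : ℕ) : ℂ)‖ := by
        have hre : (((j : ℕ) : ℂ) - ((k : ℕ) : ℂ)).re = ((j : ℕ) : ℝ) - ((k : ℕ) : ℝ) := by
          simp
        have habs : |(((j : ℕ) : ℂ) - ((k : ℕ) : ℂ)).re| ≤ ‖((j : ℕ) : ℂ) - ((k : ℕ) : ℂ)‖ :=
          Complex.abs_re_le_norm _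
        have hne : (j : ℕ) ≠ (k : ℕ) := fun h => hjk (Fin.ext h)
        have h1 : (1 : ℝ) ≤ |((j : ℕ) : ℝ) - ((k : ℕ) : ℝ)| := by
          rcases lt_or_gt_of_ne hne with h | h
          · rw [abs_sub_comm, abs_of_pos (show (0:ℝ) < ((k : ℕ) : ℝ) - ((j : ℕ) : ℝ) by
              have : ((j : ℕ) : ℝ) < ((k : ℕ) : ℝ) := by exact_mod_cast h
              linarith)]
            have : ((j : ℕ) : ℝ) + 1 ≤ ((k : ℕ) : ℝ) := by exact_mod_cast h
            linarith
          · rw [abs_of_pos (show (0:ℝ) < ((j : ℕ) : ℝ) - ((k : ℕ) : ℝ) by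
              have : ((k : ℕ) : ℝ) < ((j : ℕ) : ℝ) := by exact_mod_cast h
              linarith)]
            have : ((k : ℕ) : ℝ) + 1 ≤ ((j : ℕ) : ℝ) := by exact_mod_cast h
            linarith
        rw [hre] at habs
        linarith
      have hnormG : ‖Complex.I * M j k / ((c : ℂ) * (((j : ℕ) : ℂ) - ((k : ℕ) : ℂ)))‖
          = ‖M j k‖ / (c * ‖((j : ℕ) : ℂ) - ((k : ℕ) : ℂ)‖) := by
        rw [norm_div, norm_mul, norm_mul, Complex.norm_I, one_mul, Complex.norm_real,
          Real.norm_eq_abs, abs_of_pos hc]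
      rw [hnormG, div_pow, mul_pow]
      apply div_le_div_of_nonneg_left (by positivity) (by positivity)
      nlinarith [hge1, hc, sq_nonneg (‖((j : ℕ) : ℂ) - ((k : ℕ) : ℂ)‖ - 1), sq_nonneg c]
  have hG0norm : ‖G0‖ ≤ Real.sqrt ((d : ℝ) * n ^ 2 / c ^ 2) := by
    refine (opNorm_le_frobenius G0).trans (Real.sqrt_le_sqrt ?_)
    calc ∑ j, ∑ k, ‖G0 j k‖ ^ 2 ≤ ∑ j, ∑ k, ‖M j k‖ ^ 2 / c ^ 2 :=
          Finset.sum_le_sum fun j _ => Finset.sum_le_sum fun k _ => hG0entry j k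
      _ = (∑ j, ∑ k, ‖M j k‖ ^ 2) / c ^ 2 := by
          simp only [← Finset.sum_div]
      _ ≤ (d : ℝ) * n ^ 2 / c ^ 2 := by
          apply div_le_div_of_nonneg_right hMsum (by positivity)
  have hdn : (d : ℝ) * n ^ 2 / c ^ 2 = B ^ 2 := by
    rw [hc2, hB2]
    have hdd : Real.sqrt d * Real.sqrt d = (d : ℝ) := Real.mul_self_sqrt (Nat.cast_nonneg d)
    rw [div_eq_iff (by positivity), show Real.sqrt d * (((d : ℝ) - 1) / 2) * n * (2 * Real.sqrt d * n / ((d : ℝ) - 1)) = (Real.sqrt d * Real.sqrt d) * n ^ 2 * (((d : ℝ) - 1) / ((d : ℝ) - 1)) by ring,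
      div_self hd1R.ne', mul_one, hdd]
  have hGnorm : ‖G‖ ≤ B := by
    rw [hGdef]
    refine (conj_norm_le Q G0 hQ1 hQ2).trans (hG0norm.trans ?_)
    rw [hdn, Real.sqrt_sq hBnn]
  exact ⟨F, G, hconjHerm F0 hF0H, hconjHerm G0 hG0H, hcommFG, hFnorm, hGnorm⟩

end CommAux

theorem exists_balanced_commutator_decomposition {d : ℕ} (hd : 2 ≤ d)
    (H : Matrix (Fin d) (Fin d) ℂ) (hH : H.IsHermitian)
    (htr : Matrix.trace H = 0) :
    ∃ F G : Matrix (Fin d) (Fin d) ℂ, F.IsHermitian ∧ G.IsHermitian ∧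
      ⁅F, G⁆ = Complex.I • H ∧
      ‖F‖ ≤ (d : ℝ) ^ ((1 : ℝ) / 4) * (((d : ℝ) - 1) / 2) ^ ((1 : ℝ) / 2) * Real.sqrt ‖H‖ ∧
      ‖G‖ ≤ (d : ℝ) ^ ((1 : ℝ) / 4) * (((d : ℝ) - 1) / 2) ^ ((1 : ℝ) / 2) * Real.sqrt ‖H‖ := by
  exact CommAux.main hd H hH htr
end

section
/- Suppose F and G are Hermitian matrices with ‖F‖ < δ and ‖G‖ < δ. Then ‖exp(iF)exp(iG)exp(−iF)exp(−iG) − exp(−[F,G])‖ ≤ c₁ δ³ for some universal constant c₁ (one may take c₁ = 10). -/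
open scoped Matrix.Norms.L2Operator
open Matrix NormedSpace

section AuxLemmas

variable {𝔹 : Type*} [NormedRing 𝔹] [NormedAlgebra ℂ 𝔹] [CompleteSpace 𝔹]

private lemma nmul {x y : 𝔹} {a b : ℝ} (hx : ‖x‖ ≤ a) (hy : ‖y‖ ≤ b) (ha : 0 ≤ a) :
    ‖x * y‖ ≤ a * b :=
  (norm_mul_le x y).trans (mul_le_mul hx hy (norm_nonneg y) ha)

private lemma exp_tail_bound (M : 𝔹) (n : ℕ) (hn : 0 < n) (r : ℝ) (hM : ‖M‖ ≤ r)
    (hr : r ≤ n) :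
    ‖exp M - ∑ k ∈ Finset.range n, (k.factorial : ℂ)⁻¹ • M ^ k‖ ≤
      r ^ n / n.factorial * ((n + 1) / (n + 1 - r)) := by
  have hr0 : 0 ≤ r := le_trans (norm_nonneg M) hM
  have hrn1 : r < n + 1 := lt_of_le_of_lt hr (by exact_mod_cast lt_add_one (n : ℝ))
  have hq0 : 0 ≤ r / (n + 1) := by positivity
  have hq1 : r / (n + 1) < 1 := by
    rw [div_lt_one (by positivity)]; exact hrn1
  have hsum : Summable (fun k => (k.factorial : ℂ)⁻¹ • M ^ k) := expSeries_summable' M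
  have key : exp M - ∑ k ∈ Finset.range n, (k.factorial : ℂ)⁻¹ • M ^ k
      = ∑' i : ℕ, ((i + n).factorial : ℂ)⁻¹ • M ^ (i + n) := by
    simp only [exp_eq_tsum ℂ]
    rw [← Summable.sum_add_tsum_nat_add n hsum]
    abel
  rw [key]
  have hsn : Summable (fun i => ‖((i + n).factorial : ℂ)⁻¹ • M ^ (i + n)‖) :=
    ((summable_nat_add_iff n).mpr (norm_expSeries_summable' M))
  have hgeo : Summable (fun i : ℕ => r ^ n / n.factorial * (r / (n + 1)) ^ i) :=
    (summable_geometric_of_lt_one hq0 hq1).mul_left _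
  have hterm : ∀ i : ℕ, ‖((i + n).factorial : ℂ)⁻¹ • M ^ (i + n)‖ ≤
      r ^ n / n.factorial * (r / (n + 1)) ^ i := by
    intro i
    rw [norm_smul, norm_inv, Complex.norm_natCast]
    have h1 : ‖M ^ (i + n)‖ ≤ r ^ (i + n) :=
      le_trans (norm_pow_le' M (by omega)) (pow_le_pow_left₀ (norm_nonneg M) hM _)
    have h2 : (n.factorial : ℝ) * (n + 1) ^ i ≤ ((i + n).factorial : ℝ) := by
      rw [add_comm i n]
      exact_mod_cast Nat.factorial_mul_pow_le_factorial
    have hf1 : (0:ℝ) < (n.factorial : ℝ) * (n + 1) ^ i := by positivity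
    calc (((i + n).factorial : ℝ))⁻¹ * ‖M ^ (i + n)‖
        ≤ (((i + n).factorial : ℝ))⁻¹ * r ^ (i + n) :=
          mul_le_mul_of_nonneg_left h1 (by positivity)
      _ ≤ ((n.factorial : ℝ) * (n + 1) ^ i)⁻¹ * r ^ (i + n) := by
          apply mul_le_mul_of_nonneg_right _ (by positivity)
          exact inv_anti₀ hf1 h2
      _ = r ^ n / n.factorial * (r / (n + 1)) ^ i := by
          rw [pow_add, mul_inv, div_pow]
          field_simp
  calc ‖∑' i : ℕ, ((i + n).factorial : ℂ)⁻¹ • M ^ (i + n)‖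
      ≤ ∑' i : ℕ, ‖((i + n).factorial : ℂ)⁻¹ • M ^ (i + n)‖ := norm_tsum_le_tsum_norm hsn
    _ ≤ ∑' i : ℕ, r ^ n / n.factorial * (r / (n + 1)) ^ i := Summable.tsum_le_tsum hterm hsn hgeo
    _ = r ^ n / n.factorial * (1 - r / (n + 1))⁻¹ := by
        rw [tsum_mul_left, tsum_geometric_of_lt_one hq0 hq1]
    _ = r ^ n / n.factorial * ((n + 1) / (n + 1 - r)) := by
        congr 1
        have h5 : (1 : ℝ) - r / (n + 1) = (n + 1 - r) / (n + 1) := by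
          field_simp
        rw [h5, inv_div]

private lemma exp_tail4 (M : 𝔹) (r : ℝ) (hM : ‖M‖ ≤ r) (hr : r ≤ 3/5) :
    ‖exp M - (1 + M + (2:ℂ)⁻¹ • M ^ 2 + (6:ℂ)⁻¹ • M ^ 3)‖ ≤ r ^ 4 / 21 := by
  have hr0 : 0 ≤ r := le_trans (norm_nonneg M) hM
  have h := exp_tail_bound M 4 (by norm_num) r hM (by push_cast; linarith)
  have hsum4 : ∑ k ∈ Finset.range 4, (k.factorial : ℂ)⁻¹ • M ^ k
      = 1 + M + (2:ℂ)⁻¹ • M ^ 2 + (6:ℂ)⁻¹ • M ^ 3 := by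
    rw [Finset.sum_range_succ, Finset.sum_range_succ, Finset.sum_range_succ,
      Finset.sum_range_one]
    norm_num [Nat.factorial]
  rw [hsum4] at h
  refine h.trans ?_
  have hfac : ((4:ℕ).factorial : ℝ) = 24 := by norm_num [Nat.factorial]
  rw [hfac]
  have h5 : (0:ℝ) < (4:ℕ) + 1 - r := by push_cast; linarith
  calc r ^ 4 / 24 * (((4:ℕ) + 1) / ((4:ℕ) + 1 - r))
      = r ^ 4 * 5 / (24 * (5 - r)) := by push_cast; rw [div_mul_div_comm]; norm_num
    _ ≤ r ^ 4 / 21 := by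
        rw [div_le_div_iff₀ (by push_cast at h5 ⊢; linarith) (by norm_num)]
        nlinarith [pow_nonneg hr0 4]

private lemma exp_tail2 (M : 𝔹) (s : ℝ) (hM : ‖M‖ ≤ s) (hs : s ≤ 18/25) :
    ‖exp M - (1 + M)‖ ≤ (25/38) * s ^ 2 := by
  have hs0 : 0 ≤ s := le_trans (norm_nonneg M) hM
  have h := exp_tail_bound M 2 (by norm_num) s hM (by push_cast; linarith)
  have hsum2 : ∑ k ∈ Finset.range 2, (k.factorial : ℂ)⁻¹ • M ^ k = 1 + M := by
    rw [Finset.sum_range_succ, Finset.sum_range_one]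
    norm_num [Nat.factorial]
  rw [hsum2] at h
  refine h.trans ?_
  have hfac : ((2:ℕ).factorial : ℝ) = 2 := by norm_num [Nat.factorial]
  rw [hfac]
  have h3 : (0:ℝ) < (2:ℕ) + 1 - s := by push_cast; linarith
  calc s ^ 2 / 2 * (((2:ℕ) + 1) / ((2:ℕ) + 1 - s))
      = s ^ 2 * 3 / (2 * (3 - s)) := by push_cast; rw [div_mul_div_comm]; norm_num
    _ ≤ (25/38) * s ^ 2 := by
        rw [div_le_iff₀ (by push_cast at h3 ⊢; linarith)]
        nlinarith [pow_nonneg hs0 2]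

end AuxLemmas

set_option maxHeartbeats 4000000 in
theorem exp_group_commutator_approx {d : ℕ}
    (F G : Matrix (Fin d) (Fin d) ℂ)
    (hF : F.IsHermitian) (hG : G.IsHermitian)
    (δ : ℝ) (hFδ : ‖F‖ < δ) (hGδ : ‖G‖ < δ) :
    ‖exp (Complex.I • F) * exp (Complex.I • G) *
        exp (-(Complex.I • F)) * exp (-(Complex.I • G)) -
        exp (-⁅F, G⁆)‖ ≤ 10 * δ ^ 3 := by
  have hδ0 : 0 < δ := lt_of_le_of_lt (norm_nonneg F) hFδ
  rcases Nat.eq_zero_or_pos d with hd0 | hd0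
  · subst hd0
    have hz : exp (Complex.I • F) * exp (Complex.I • G) *
        exp (-(Complex.I • F)) * exp (-(Complex.I • G)) -
        exp (-⁅F, G⁆) = 0 := by
      ext i j
      exact i.elim0
    rw [hz, norm_zero]
    positivity
  haveI : NeZero d := ⟨hd0.ne'⟩
  haveI : Nonempty (Fin d) := ⟨⟨0, hd0⟩⟩
  set A : (Matrix (Fin d) (Fin d) ℂ) := Complex.I • F with hAdef
  set B : (Matrix (Fin d) (Fin d) ℂ) := Complex.I • G with hBdef
  set K : (Matrix (Fin d) (Fin d) ℂ) := A * B - B * A with hKdef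
  have hδnn : (0:ℝ) ≤ δ := hδ0.le
  have hA' : ‖A‖ ≤ δ := by
    rw [hAdef, norm_smul, Complex.norm_I, one_mul]; exact hFδ.le
  have hB' : ‖B‖ ≤ δ := by
    rw [hBdef, norm_smul, Complex.norm_I, one_mul]; exact hGδ.le
  have hsA : star A = -A := by
    rw [hAdef, star_smul, Matrix.star_eq_conjTranspose, hF.eq, Complex.star_def,
      Complex.conj_I, neg_smul]
  have hsB : star B = -B := by
    rw [hBdef, star_smul, Matrix.star_eq_conjTranspose, hG.eq, Complex.star_def,
      Complex.conj_I, neg_smul]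
  have hsK : star K = -K := by
    rw [hKdef, star_sub, StarMul.star_mul, StarMul.star_mul, hsA, hsB]
    simp only [mul_neg, neg_mul, neg_neg, neg_sub]
  have hlie : -⁅F, G⁆ = K := by
    rw [hKdef, hAdef, hBdef, Ring.lie_def]
    rw [smul_mul_assoc, mul_smul_comm, smul_smul, smul_mul_assoc, mul_smul_comm, smul_smul,
      Complex.I_mul_I]
    module
  rw [hlie]
  letI : NormedAlgebra ℚ (Matrix (Fin d) (Fin d) ℂ) := NormedAlgebra.restrictScalars ℚ ℂ _
  have huA : exp A ∈ unitary (Matrix (Fin d) (Fin d) ℂ) :=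
    exp_mem_unitary_of_mem_skewAdjoint (skewAdjoint.mem_iff.mpr hsA)
  have huB : exp B ∈ unitary (Matrix (Fin d) (Fin d) ℂ) :=
    exp_mem_unitary_of_mem_skewAdjoint (skewAdjoint.mem_iff.mpr hsB)
  have huA' : exp (-A) ∈ unitary (Matrix (Fin d) (Fin d) ℂ) :=
    exp_mem_unitary_of_mem_skewAdjoint (skewAdjoint.mem_iff.mpr
      (by rw [star_neg, hsA, neg_neg]))
  have huB' : exp (-B) ∈ unitary (Matrix (Fin d) (Fin d) ℂ) :=
    exp_mem_unitary_of_mem_skewAdjoint (skewAdjoint.mem_iff.mpr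
      (by rw [star_neg, hsB, neg_neg]))
  have huK : exp K ∈ unitary (Matrix (Fin d) (Fin d) ℂ) :=
    exp_mem_unitary_of_mem_skewAdjoint (skewAdjoint.mem_iff.mpr hsK)
  by_cases hbig : 2 ≤ 10 * δ ^ 3
  · have hU : exp A * exp B * exp (-A) * exp (-B) ∈ unitary (Matrix (Fin d) (Fin d) ℂ) :=
      mul_mem (mul_mem (mul_mem huA huB) huA') huB'
    calc ‖exp A * exp B * exp (-A) * exp (-B) - exp K‖
        ≤ ‖exp A * exp B * exp (-A) * exp (-B)‖ + ‖exp K‖ := norm_sub_le _ _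
      _ ≤ 2 := by
          rw [CStarRing.norm_of_mem_unitary hU, CStarRing.norm_of_mem_unitary huK]
          norm_num
      _ ≤ 10 * δ ^ 3 := hbig
  · push_neg at hbig
    have hδ3 : δ ^ 3 ≤ 1/5 := by linarith
    have hδ35 : δ ≤ 3/5 := by nlinarith [sq_nonneg (δ - 3/5), sq_nonneg (δ + 3/5)]
    have hδ2 : δ ^ 2 ≤ 9/25 := by nlinarith
    have hcA : exp (-A) * exp A = 1 := by
      rw [← exp_add_of_commute _ _ (Commute.refl A).neg_left, neg_add_cancel, exp_zero]
    have hcB : exp (-B) * exp B = 1 := by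
      rw [← exp_add_of_commute _ _ (Commute.refl B).neg_left, neg_add_cancel, exp_zero]
    have hK2 : ‖K‖ ≤ 2 * δ ^ 2 := by
      rw [hKdef]
      refine le_trans (norm_sub_le _ _) ?_
      have h1 : ‖A * B‖ ≤ δ * δ := nmul hA' hB' hδnn
      have h2 : ‖B * A‖ ≤ δ * δ := nmul hB' hA' hδnn
      nlinarith
    -- step 1 : multiply by the unitary exp B * exp A on the right
    have hswap : ‖exp A * exp B * exp (-A) * exp (-B) - exp K‖
        = ‖exp A * exp B - exp K * (exp B * exp A)‖ := by
      rw [← CStarRing.norm_mul_mem_unitary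
        (exp A * exp B * exp (-A) * exp (-B) - exp K) (mul_mem huB huA)]
      congr 1
      rw [sub_mul]
      congr 1
      rw [mul_assoc (exp A * exp B * exp (-A)) (exp (-B)) (exp B * exp A),
        ← mul_assoc (exp (-B)) (exp B) (exp A), hcB, one_mul,
        mul_assoc (exp A * exp B) (exp (-A)) (exp A), hcA, mul_one]
    rw [hswap]
    -- truncated exponentials
    set EA : (Matrix (Fin d) (Fin d) ℂ) := 1 + A + (2:ℂ)⁻¹ • A ^ 2 + (6:ℂ)⁻¹ • A ^ 3 with hEAdef
    set EB : (Matrix (Fin d) (Fin d) ℂ) := 1 + B + (2:ℂ)⁻¹ • B ^ 2 + (6:ℂ)⁻¹ • B ^ 3 with hEBdef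
    have htA : ‖exp A - EA‖ ≤ δ ^ 4 / 21 := exp_tail4 A δ hA' hδ35
    have htB : ‖exp B - EB‖ ≤ δ ^ 4 / 21 := exp_tail4 B δ hB' hδ35
    have hhalf : ‖(2:ℂ)⁻¹‖ = (2:ℝ)⁻¹ := by
      rw [norm_inv, Complex.norm_ofNat]
    have hsixth : ‖(6:ℂ)⁻¹‖ = (6:ℝ)⁻¹ := by
      rw [norm_inv, Complex.norm_ofNat]
    have hpoly : (0:ℝ) ≤ 1 + δ + δ^2/2 + δ^3/6 := by positivity
    have hnEA : ‖EA‖ ≤ 1 + δ + δ^2/2 + δ^3/6 := by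
      rw [hEAdef]
      refine le_trans (norm_add_le _ _) ?_
      refine add_le_add (le_trans (norm_add_le _ _) (add_le_add
        (le_trans (norm_add_le _ _) (add_le_add (le_of_eq CStarRing.norm_one) hA')) ?_)) ?_
      · rw [norm_smul, hhalf]
        have : ‖A ^ 2‖ ≤ δ ^ 2 :=
          le_trans (norm_pow_le' A two_pos) (pow_le_pow_left₀ (norm_nonneg A) hA' 2)
        rw [inv_eq_one_div, div_mul_eq_mul_div, one_mul]
        linarith
      · rw [norm_smul, hsixth]
        have : ‖A ^ 3‖ ≤ δ ^ 3 :=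
          le_trans (norm_pow_le' A three_pos) (pow_le_pow_left₀ (norm_nonneg A) hA' 3)
        rw [inv_eq_one_div, div_mul_eq_mul_div, one_mul]
        linarith
    have hnEB : ‖EB‖ ≤ 1 + δ + δ^2/2 + δ^3/6 := by
      rw [hEBdef]
      refine le_trans (norm_add_le _ _) ?_
      refine add_le_add (le_trans (norm_add_le _ _) (add_le_add
        (le_trans (norm_add_le _ _) (add_le_add (le_of_eq CStarRing.norm_one) hB')) ?_)) ?_
      · rw [norm_smul, hhalf]
        have : ‖B ^ 2‖ ≤ δ ^ 2 :=
          le_trans (norm_pow_le' B two_pos) (pow_le_pow_left₀ (norm_nonneg B) hB' 2)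
        rw [inv_eq_one_div, div_mul_eq_mul_div, one_mul]
        linarith
      · rw [norm_smul, hsixth]
        have : ‖B ^ 3‖ ≤ δ ^ 3 :=
          le_trans (norm_pow_le' B three_pos) (pow_le_pow_left₀ (norm_nonneg B) hB' 3)
        rw [inv_eq_one_div, div_mul_eq_mul_div, one_mul]
        linarith
    -- the four pieces
    have hdec : exp A * exp B - exp K * (exp B * exp A)
        = ((exp A - EA) * exp B + EA * (exp B - EB))
          - (1 + K) * ((exp B - EB) * exp A + EB * (exp A - EA))
          - (exp K - 1 - K) * (exp B * exp A)
          + (EA * EB - EB * EA - K * (EB * EA)) := by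
      noncomm_ring
    have hn1 : ‖(exp A - EA) * exp B + EA * (exp B - EB)‖
        ≤ δ ^ 4 / 21 + (1 + δ + δ^2/2 + δ^3/6) * (δ ^ 4 / 21) := by
      refine norm_add_le_of_le ?_ (nmul hnEA htB hpoly)
      rw [CStarRing.norm_mul_mem_unitary _ huB]
      exact htA
    have hn2' : ‖(exp B - EB) * exp A + EB * (exp A - EA)‖
        ≤ δ ^ 4 / 21 + (1 + δ + δ^2/2 + δ^3/6) * (δ ^ 4 / 21) := by
      refine norm_add_le_of_le ?_ (nmul hnEB htA hpoly)
      rw [CStarRing.norm_mul_mem_unitary _ huA]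
      exact htB
    have h1K : ‖(1:(Matrix (Fin d) (Fin d) ℂ)) + K‖ ≤ 1 + 2 * δ ^ 2 :=
      norm_add_le_of_le (le_of_eq CStarRing.norm_one) hK2
    have hn2 : ‖((1:(Matrix (Fin d) (Fin d) ℂ)) + K) * ((exp B - EB) * exp A + EB * (exp A - EA))‖
        ≤ (1 + 2 * δ ^ 2) * (δ ^ 4 / 21 + (1 + δ + δ^2/2 + δ^3/6) * (δ ^ 4 / 21)) :=
      nmul h1K hn2' (by positivity)
    have hn3 : ‖(exp K - 1 - K) * (exp B * exp A)‖ ≤ (25/38) * (2 * δ ^ 2) ^ 2 := by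
      rw [CStarRing.norm_mul_mem_unitary _ (mul_mem huB huA), sub_sub]
      exact exp_tail2 K (2 * δ ^ 2) hK2 (by nlinarith)
    -- the core polynomial bound
    set P : (Matrix (Fin d) (Fin d) ℂ) := 6 + 6*A + 3*A^2 + A^3 with hPdef
    set Q : (Matrix (Fin d) (Fin d) ℂ) := 6 + 6*B + 3*B^2 + B^3 with hQdef
    have hEAP : EA = (6:ℂ)⁻¹ • P := by
      rw [hEAdef, hPdef]
      have e2 : (6:(Matrix (Fin d) (Fin d) ℂ)) * A = (6:ℂ) • A := by
        rw [show ((6:ℂ)) = ((6:ℕ):ℂ) by norm_num, Nat.cast_smul_eq_nsmul, nsmul_eq_mul]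
        norm_num
      have e3 : (3:(Matrix (Fin d) (Fin d) ℂ)) * A^2 = (3:ℂ) • A^2 := by
        rw [show ((3:ℂ)) = ((3:ℕ):ℂ) by norm_num, Nat.cast_smul_eq_nsmul, nsmul_eq_mul]
        norm_num
      have e1 : (6:(Matrix (Fin d) (Fin d) ℂ)) = (6:ℂ) • (1:(Matrix (Fin d) (Fin d) ℂ)) := by
        rw [show ((6:ℂ)) = ((6:ℕ):ℂ) by norm_num, Nat.cast_smul_eq_nsmul, nsmul_eq_mul,
          mul_one]
        norm_num
      rw [e2, e3, e1, smul_add, smul_add, smul_add, smul_smul, smul_smul, smul_smul]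
      norm_num [smul_smul]
      exact hAdef
    have hEBP : EB = (6:ℂ)⁻¹ • Q := by
      rw [hEBdef, hQdef]
      have e2 : (6:(Matrix (Fin d) (Fin d) ℂ)) * B = (6:ℂ) • B := by
        rw [show ((6:ℂ)) = ((6:ℕ):ℂ) by norm_num, Nat.cast_smul_eq_nsmul, nsmul_eq_mul]
        norm_num
      have e3 : (3:(Matrix (Fin d) (Fin d) ℂ)) * B^2 = (3:ℂ) • B^2 := by
        rw [show ((3:ℂ)) = ((3:ℕ):ℂ) by norm_num, Nat.cast_smul_eq_nsmul, nsmul_eq_mul]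
        norm_num
      have e1 : (6:(Matrix (Fin d) (Fin d) ℂ)) = (6:ℂ) • (1:(Matrix (Fin d) (Fin d) ℂ)) := by
        rw [show ((6:ℂ)) = ((6:ℕ):ℂ) by norm_num, Nat.cast_smul_eq_nsmul, nsmul_eq_mul,
          mul_one]
        norm_num
      rw [e2, e3, e1, smul_add, smul_add, smul_add, smul_smul, smul_smul, smul_smul]
      norm_num [smul_smul]
      exact hBdef
    have hRB : ‖P * Q - Q * P - K * (Q * P)‖
        ≤ 144*δ^3 + 162*δ^4 + 108*δ^5 + 44*δ^6 + 12*δ^7 + 2*δ^8 := by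
      have hid : P * Q - Q * P - K * (Q * P) = (18:(Matrix (Fin d) (Fin d) ℂ)) * (A*A*B) + (-36:(Matrix (Fin d) (Fin d) ℂ)) * (A*B*A) + (-18:(Matrix (Fin d) (Fin d) ℂ)) * (A*B*B) + (18:(Matrix (Fin d) (Fin d) ℂ)) * (B*A*A) + (36:(Matrix (Fin d) (Fin d) ℂ)) * (B*A*B) + (-18:(Matrix (Fin d) (Fin d) ℂ)) * (B*B*A) + (6:(Matrix (Fin d) (Fin d) ℂ)) * (A*A*A*B) + (9:(Matrix (Fin d) (Fin d) ℂ)) * (A*A*B*B) + (-18:(Matrix (Fin d) (Fin d) ℂ)) * (A*B*A*A) + (-36:(Matrix (Fin d) (Fin d) ℂ)) * (A*B*B*A) + (-12:(Matrix (Fin d) (Fin d) ℂ)) * (A*B*B*B) + (12:(Matrix (Fin d) (Fin d) ℂ)) * (B*A*A*A) + (36:(Matrix (Fin d) (Fin d) ℂ)) * (B*A*B*A) + (18:(Matrix (Fin d) (Fin d) ℂ)) * (B*A*B*B) + (-9:(Matrix (Fin d) (Fin d) ℂ)) * (B*B*A*A) + (-6:(Matrix (Fin d) (Fin d) ℂ))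 * (B*B*B*A) + (3:(Matrix (Fin d) (Fin d) ℂ)) * (A*A*A*B*B) + (3:(Matrix (Fin d) (Fin d) ℂ)) * (A*A*B*B*B) + (-6:(Matrix (Fin d) (Fin d) ℂ)) * (A*B*A*A*A) + (-18:(Matrix (Fin d) (Fin d) ℂ)) * (A*B*B*A*A) + (-18:(Matrix (Fin d) (Fin d) ℂ)) * (A*B*B*B*A) + (-6:(Matrix (Fin d) (Fin d) ℂ)) * (A*B*B*B*B) + (6:(Matrix (Fin d) (Fin d) ℂ)) * (B*A*A*A*A) + (18:(Matrix (Fin d) (Fin d) ℂ)) * (B*A*B*A*A) + (18:(Matrix (Fin d) (Fin d) ℂ)) * (B*A*B*B*A) + (6:(Matrix (Fin d) (Fin d) ℂ)) * (B*A*B*B*B) + (-3:(Matrix (Fin d) (Fin d) ℂ)) * (B*B*A*A*A) + (-3:(Matrix (Fin d) (Fin d) ℂ)) * (B*B*B*A*A) + (1:(Matrix (Fin d) (Fin d) ℂ)) * (A*A*A*B*B*B) + (-6:(Matrix (Fin d) (Fin d) ℂ)) * (A*B*B*A*A*A) + (-9:(Matrix (Fin d) (Fin d) ℂ)) * (A*B*B*B*A*A)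 + (-6:(Matrix (Fin d) (Fin d) ℂ)) * (A*B*B*B*B*A) + (6:(Matrix (Fin d) (Fin d) ℂ)) * (B*A*B*A*A*A) + (9:(Matrix (Fin d) (Fin d) ℂ)) * (B*A*B*B*A*A) + (6:(Matrix (Fin d) (Fin d) ℂ)) * (B*A*B*B*B*A) + (-1:(Matrix (Fin d) (Fin d) ℂ)) * (B*B*B*A*A*A) + (-3:(Matrix (Fin d) (Fin d) ℂ)) * (A*B*B*B*A*A*A) + (-3:(Matrix (Fin d) (Fin d) ℂ)) * (A*B*B*B*B*A*A) + (3:(Matrix (Fin d) (Fin d) ℂ)) * (B*A*B*B*A*A*A) + (3:(Matrix (Fin d) (Fin d) ℂ)) * (B*A*B*B*B*A*A) + (-1:(Matrix (Fin d) (Fin d) ℂ)) * (A*B*B*B*B*A*A*A) + (1:(Matrix (Fin d) (Fin d) ℂ)) * (B*A*B*B*B*A*A*A) := by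
        rw [hKdef, hPdef, hQdef]; noncomm_ring
      have hc1 : ‖(1:(Matrix (Fin d) (Fin d) ℂ))‖ ≤ (1:ℝ) := le_of_eq CStarRing.norm_one
      have hc3 : ‖(3:(Matrix (Fin d) (Fin d) ℂ))‖ ≤ (3:ℝ) := by
        calc ‖(3:(Matrix (Fin d) (Fin d) ℂ))‖ = ‖((3:ℕ):(Matrix (Fin d) (Fin d) ℂ))‖ := by norm_cast
          _ ≤ (3:ℕ) * ‖(1:(Matrix (Fin d) (Fin d) ℂ))‖ := Nat.norm_cast_le 3
          _ = (3:ℝ) := by rw [CStarRing.norm_one]; norm_num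
      have hc6 : ‖(6:(Matrix (Fin d) (Fin d) ℂ))‖ ≤ (6:ℝ) := by
        calc ‖(6:(Matrix (Fin d) (Fin d) ℂ))‖ = ‖((6:ℕ):(Matrix (Fin d) (Fin d) ℂ))‖ := by norm_cast
          _ ≤ (6:ℕ) * ‖(1:(Matrix (Fin d) (Fin d) ℂ))‖ := Nat.norm_cast_le 6
          _ = (6:ℝ) := by rw [CStarRing.norm_one]; norm_num
      have hc9 : ‖(9:(Matrix (Fin d) (Fin d) ℂ))‖ ≤ (9:ℝ) := by
        calc ‖(9:(Matrix (Fin d) (Fin d) ℂ))‖ = ‖((9:ℕ):(Matrix (Fin d) (Fin d) ℂ))‖ := by norm_cast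
          _ ≤ (9:ℕ) * ‖(1:(Matrix (Fin d) (Fin d) ℂ))‖ := Nat.norm_cast_le 9
          _ = (9:ℝ) := by rw [CStarRing.norm_one]; norm_num
      have hc12 : ‖(12:(Matrix (Fin d) (Fin d) ℂ))‖ ≤ (12:ℝ) := by
        calc ‖(12:(Matrix (Fin d) (Fin d) ℂ))‖ = ‖((12:ℕ):(Matrix (Fin d) (Fin d) ℂ))‖ := by norm_cast
          _ ≤ (12:ℕ) * ‖(1:(Matrix (Fin d) (Fin d) ℂ))‖ := Nat.norm_cast_le 12
          _ = (12:ℝ) := by rw [CStarRing.norm_one]; norm_num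
      have hc18 : ‖(18:(Matrix (Fin d) (Fin d) ℂ))‖ ≤ (18:ℝ) := by
        calc ‖(18:(Matrix (Fin d) (Fin d) ℂ))‖ = ‖((18:ℕ):(Matrix (Fin d) (Fin d) ℂ))‖ := by norm_cast
          _ ≤ (18:ℕ) * ‖(1:(Matrix (Fin d) (Fin d) ℂ))‖ := Nat.norm_cast_le 18
          _ = (18:ℝ) := by rw [CStarRing.norm_one]; norm_num
      have hc36 : ‖(36:(Matrix (Fin d) (Fin d) ℂ))‖ ≤ (36:ℝ) := by
        calc ‖(36:(Matrix (Fin d) (Fin d) ℂ))‖ = ‖((36:ℕ):(Matrix (Fin d) (Fin d) ℂ))‖ := by norm_cast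
          _ ≤ (36:ℕ) * ‖(1:(Matrix (Fin d) (Fin d) ℂ))‖ := Nat.norm_cast_le 36
          _ = (36:ℝ) := by rw [CStarRing.norm_one]; norm_num
      have hcm1 : ‖(-1:(Matrix (Fin d) (Fin d) ℂ))‖ ≤ (1:ℝ) := by
        rw [show (-1:(Matrix (Fin d) (Fin d) ℂ)) = -(1:(Matrix (Fin d) (Fin d) ℂ)) by norm_num, norm_neg]; exact hc1
      have hcm3 : ‖(-3:(Matrix (Fin d) (Fin d) ℂ))‖ ≤ (3:ℝ) := by
        rw [show (-3:(Matrix (Fin d) (Fin d) ℂ)) = -(3:(Matrix (Fin d) (Fin d) ℂ)) by norm_num, norm_neg]; exact hc3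
      have hcm6 : ‖(-6:(Matrix (Fin d) (Fin d) ℂ))‖ ≤ (6:ℝ) := by
        rw [show (-6:(Matrix (Fin d) (Fin d) ℂ)) = -(6:(Matrix (Fin d) (Fin d) ℂ)) by norm_num, norm_neg]; exact hc6
      have hcm9 : ‖(-9:(Matrix (Fin d) (Fin d) ℂ))‖ ≤ (9:ℝ) := by
        rw [show (-9:(Matrix (Fin d) (Fin d) ℂ)) = -(9:(Matrix (Fin d) (Fin d) ℂ)) by norm_num, norm_neg]; exact hc9
      have hcm12 : ‖(-12:(Matrix (Fin d) (Fin d) ℂ))‖ ≤ (12:ℝ) := by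
        rw [show (-12:(Matrix (Fin d) (Fin d) ℂ)) = -(12:(Matrix (Fin d) (Fin d) ℂ)) by norm_num, norm_neg]; exact hc12
      have hcm18 : ‖(-18:(Matrix (Fin d) (Fin d) ℂ))‖ ≤ (18:ℝ) := by
        rw [show (-18:(Matrix (Fin d) (Fin d) ℂ)) = -(18:(Matrix (Fin d) (Fin d) ℂ)) by norm_num, norm_neg]; exact hc18
      have hcm36 : ‖(-36:(Matrix (Fin d) (Fin d) ℂ))‖ ≤ (36:ℝ) := by
        rw [show (-36:(Matrix (Fin d) (Fin d) ℂ)) = -(36:(Matrix (Fin d) (Fin d) ℂ)) by norm_num, norm_neg]; exact hc36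
      have hl0 : ‖(18:(Matrix (Fin d) (Fin d) ℂ)) * (A*A*B)‖ ≤ (18:ℝ) * (δ*δ*δ) := nmul hc18 (nmul (nmul hA' hA' (hδnn)) hB' (mul_nonneg (hδnn) hδnn)) (by norm_num)
      have hl1 : ‖(-36:(Matrix (Fin d) (Fin d) ℂ)) * (A*B*A)‖ ≤ (36:ℝ) * (δ*δ*δ) := nmul hcm36 (nmul (nmul hA' hB' (hδnn)) hA' (mul_nonneg (hδnn) hδnn)) (by norm_num)
      have hl2 : ‖(-18:(Matrix (Fin d) (Fin d) ℂ)) * (A*B*B)‖ ≤ (18:ℝ) * (δ*δ*δ) := nmul hcm18 (nmul (nmul hA' hB' (hδnn)) hB' (mul_nonneg (hδnn) hδnn)) (by norm_num)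
      have hl3 : ‖(18:(Matrix (Fin d) (Fin d) ℂ)) * (B*A*A)‖ ≤ (18:ℝ) * (δ*δ*δ) := nmul hc18 (nmul (nmul hB' hA' (hδnn)) hA' (mul_nonneg (hδnn) hδnn)) (by norm_num)
      have hl4 : ‖(36:(Matrix (Fin d) (Fin d) ℂ)) * (B*A*B)‖ ≤ (36:ℝ) * (δ*δ*δ) := nmul hc36 (nmul (nmul hB' hA' (hδnn)) hB' (mul_nonneg (hδnn) hδnn)) (by norm_num)
      have hl5 : ‖(-18:(Matrix (Fin d) (Fin d) ℂ)) * (B*B*A)‖ ≤ (18:ℝ) * (δ*δ*δ) := nmul hcm18 (nmul (nmul hB' hB' (hδnn)) hA' (mul_nonneg (hδnn) hδnn)) (by norm_num)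
      have hl6 : ‖(6:(Matrix (Fin d) (Fin d) ℂ)) * (A*A*A*B)‖ ≤ (6:ℝ) * (δ*δ*δ*δ) := nmul hc6 (nmul (nmul (nmul hA' hA' (hδnn)) hA' (mul_nonneg (hδnn) hδnn)) hB' (mul_nonneg (mul_nonneg (hδnn) hδnn) hδnn)) (by norm_num)
      have hl7 : ‖(9:(Matrix (Fin d) (Fin d) ℂ)) * (A*A*B*B)‖ ≤ (9:ℝ) * (δ*δ*δ*δ) := nmul hc9 (nmul (nmul (nmul hA' hA' (hδnn)) hB' (mul_nonneg (hδnn) hδnn)) hB' (mul_nonneg (mul_nonneg (hδnn) hδnn) hδnn)) (by norm_num)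
      have hl8 : ‖(-18:(Matrix (Fin d) (Fin d) ℂ)) * (A*B*A*A)‖ ≤ (18:ℝ) * (δ*δ*δ*δ) := nmul hcm18 (nmul (nmul (nmul hA' hB' (hδnn)) hA' (mul_nonneg (hδnn) hδnn)) hA' (mul_nonneg (mul_nonneg (hδnn) hδnn) hδnn)) (by norm_num)
      have hl9 : ‖(-36:(Matrix (Fin d) (Fin d) ℂ)) * (A*B*B*A)‖ ≤ (36:ℝ) * (δ*δ*δ*δ) := nmul hcm36 (nmul (nmul (nmul hA' hB' (hδnn)) hB' (mul_nonneg (hδnn) hδnn)) hA' (mul_nonneg (mul_nonneg (hδnn) hδnn) hδnn)) (by norm_num)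
      have hl10 : ‖(-12:(Matrix (Fin d) (Fin d) ℂ)) * (A*B*B*B)‖ ≤ (12:ℝ) * (δ*δ*δ*δ) := nmul hcm12 (nmul (nmul (nmul hA' hB' (hδnn)) hB' (mul_nonneg (hδnn) hδnn)) hB' (mul_nonneg (mul_nonneg (hδnn) hδnn) hδnn)) (by norm_num)
      have hl11 : ‖(12:(Matrix (Fin d) (Fin d) ℂ)) * (B*A*A*A)‖ ≤ (12:ℝ) * (δ*δ*δ*δ) := nmul hc12 (nmul (nmul (nmul hB' hA' (hδnn)) hA' (mul_nonneg (hδnn) hδnn)) hA' (mul_nonneg (mul_nonneg (hδnn) hδnn) hδnn)) (by norm_num)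
      have hl12 : ‖(36:(Matrix (Fin d) (Fin d) ℂ)) * (B*A*B*A)‖ ≤ (36:ℝ) * (δ*δ*δ*δ) := nmul hc36 (nmul (nmul (nmul hB' hA' (hδnn)) hB' (mul_nonneg (hδnn) hδnn)) hA' (mul_nonneg (mul_nonneg (hδnn) hδnn) hδnn)) (by norm_num)
      have hl13 : ‖(18:(Matrix (Fin d) (Fin d) ℂ)) * (B*A*B*B)‖ ≤ (18:ℝ) * (δ*δ*δ*δ) := nmul hc18 (nmul (nmul (nmul hB' hA' (hδnn)) hB' (mul_nonneg (hδnn) hδnn)) hB' (mul_nonneg (mul_nonneg (hδnn) hδnn) hδnn)) (by norm_num)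
      have hl14 : ‖(-9:(Matrix (Fin d) (Fin d) ℂ)) * (B*B*A*A)‖ ≤ (9:ℝ) * (δ*δ*δ*δ) := nmul hcm9 (nmul (nmul (nmul hB' hB' (hδnn)) hA' (mul_nonneg (hδnn) hδnn)) hA' (mul_nonneg (mul_nonneg (hδnn) hδnn) hδnn)) (by norm_num)
      have hl15 : ‖(-6:(Matrix (Fin d) (Fin d) ℂ)) * (B*B*B*A)‖ ≤ (6:ℝ) * (δ*δ*δ*δ) := nmul hcm6 (nmul (nmul (nmul hB' hB' (hδnn)) hB' (mul_nonneg (hδnn) hδnn)) hA' (mul_nonneg (mul_nonneg (hδnn) hδnn) hδnn)) (by norm_num)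
      have hl16 : ‖(3:(Matrix (Fin d) (Fin d) ℂ)) * (A*A*A*B*B)‖ ≤ (3:ℝ) * (δ*δ*δ*δ*δ) := nmul hc3 (nmul (nmul (nmul (nmul hA' hA' (hδnn)) hA' (mul_nonneg (hδnn) hδnn)) hB' (mul_nonneg (mul_nonneg (hδnn) hδnn) hδnn)) hB' (mul_nonneg (mul_nonneg (mul_nonneg (hδnn) hδnn) hδnn) hδnn)) (by norm_num)
      have hl17 : ‖(3:(Matrix (Fin d) (Fin d) ℂ)) * (A*A*B*B*B)‖ ≤ (3:ℝ) * (δ*δ*δ*δ*δ) := nmul hc3 (nmul (nmul (nmul (nmul hA' hA' (hδnn)) hB' (mul_nonneg (hδnn) hδnn)) hB' (mul_nonneg (mul_nonneg (hδnn) hδnn) hδnn)) hB' (mul_nonneg (mul_nonneg (mul_nonneg (hδnn) hδnn) hδnn) hδnn)) (by norm_num)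
      have hl18 : ‖(-6:(Matrix (Fin d) (Fin d) ℂ)) * (A*B*A*A*A)‖ ≤ (6:ℝ) * (δ*δ*δ*δ*δ) := nmul hcm6 (nmul (nmul (nmul (nmul hA' hB' (hδnn)) hA' (mul_nonneg (hδnn) hδnn)) hA' (mul_nonneg (mul_nonneg (hδnn) hδnn) hδnn)) hA' (mul_nonneg (mul_nonneg (mul_nonneg (hδnn) hδnn) hδnn) hδnn)) (by norm_num)
      have hl19 : ‖(-18:(Matrix (Fin d) (Fin d) ℂ)) * (A*B*B*A*A)‖ ≤ (18:ℝ) * (δ*δ*δ*δ*δ) := nmul hcm18 (nmul (nmul (nmul (nmul hA' hB' (hδnn)) hB' (mul_nonneg (hδnn) hδnn)) hA' (mul_nonneg (mul_nonneg (hδnn) hδnn) hδnn)) hA' (mul_nonneg (mul_nonneg (mul_nonneg (hδnn) hδnn) hδnn) hδnn)) (by norm_num)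
      have hl20 : ‖(-18:(Matrix (Fin d) (Fin d) ℂ)) * (A*B*B*B*A)‖ ≤ (18:ℝ) * (δ*δ*δ*δ*δ) := nmul hcm18 (nmul (nmul (nmul (nmul hA' hB' (hδnn)) hB' (mul_nonneg (hδnn) hδnn)) hB' (mul_nonneg (mul_nonneg (hδnn) hδnn) hδnn)) hA' (mul_nonneg (mul_nonneg (mul_nonneg (hδnn) hδnn) hδnn) hδnn)) (by norm_num)
      have hl21 : ‖(-6:(Matrix (Fin d) (Fin d) ℂ)) * (A*B*B*B*B)‖ ≤ (6:ℝ) * (δ*δ*δ*δ*δ) := nmul hcm6 (nmul (nmul (nmul (nmul hA' hB' (hδnn)) hB' (mul_nonneg (hδnn) hδnn)) hB' (mul_nonneg (mul_nonneg (hδnn) hδnn) hδnn)) hB' (mul_nonneg (mul_nonneg (mul_nonneg (hδnn) hδnn) hδnn) hδnn)) (by norm_num)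
      have hl22 : ‖(6:(Matrix (Fin d) (Fin d) ℂ)) * (B*A*A*A*A)‖ ≤ (6:ℝ) * (δ*δ*δ*δ*δ) := nmul hc6 (nmul (nmul (nmul (nmul hB' hA' (hδnn)) hA' (mul_nonneg (hδnn) hδnn)) hA' (mul_nonneg (mul_nonneg (hδnn) hδnn) hδnn)) hA' (mul_nonneg (mul_nonneg (mul_nonneg (hδnn) hδnn) hδnn) hδnn)) (by norm_num)
      have hl23 : ‖(18:(Matrix (Fin d) (Fin d) ℂ)) * (B*A*B*A*A)‖ ≤ (18:ℝ) * (δ*δ*δ*δ*δ) := nmul hc18 (nmul (nmul (nmul (nmul hB' hA' (hδnn)) hB' (mul_nonneg (hδnn) hδnn)) hA' (mul_nonneg (mul_nonneg (hδnn) hδnn) hδnn)) hA' (mul_nonneg (mul_nonneg (mul_nonneg (hδnn) hδnn) hδnn) hδnn)) (by norm_num)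
      have hl24 : ‖(18:(Matrix (Fin d) (Fin d) ℂ)) * (B*A*B*B*A)‖ ≤ (18:ℝ) * (δ*δ*δ*δ*δ) := nmul hc18 (nmul (nmul (nmul (nmul hB' hA' (hδnn)) hB' (mul_nonneg (hδnn) hδnn)) hB' (mul_nonneg (mul_nonneg (hδnn) hδnn) hδnn)) hA' (mul_nonneg (mul_nonneg (mul_nonneg (hδnn) hδnn) hδnn) hδnn)) (by norm_num)
      have hl25 : ‖(6:(Matrix (Fin d) (Fin d) ℂ)) * (B*A*B*B*B)‖ ≤ (6:ℝ) * (δ*δ*δ*δ*δ) := nmul hc6 (nmul (nmul (nmul (nmul hB' hA' (hδnn)) hB' (mul_nonneg (hδnn) hδnn)) hB' (mul_nonneg (mul_nonneg (hδnn) hδnn) hδnn)) hB' (mul_nonneg (mul_nonneg (mul_nonneg (hδnn) hδnn) hδnn) hδnn)) (by norm_num)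
      have hl26 : ‖(-3:(Matrix (Fin d) (Fin d) ℂ)) * (B*B*A*A*A)‖ ≤ (3:ℝ) * (δ*δ*δ*δ*δ) := nmul hcm3 (nmul (nmul (nmul (nmul hB' hB' (hδnn)) hA' (mul_nonneg (hδnn) hδnn)) hA' (mul_nonneg (mul_nonneg (hδnn) hδnn) hδnn)) hA' (mul_nonneg (mul_nonneg (mul_nonneg (hδnn) hδnn) hδnn) hδnn)) (by norm_num)
      have hl27 : ‖(-3:(Matrix (Fin d) (Fin d) ℂ)) * (B*B*B*A*A)‖ ≤ (3:ℝ) * (δ*δ*δ*δ*δ) := nmul hcm3 (nmul (nmul (nmul (nmul hB' hB' (hδnn)) hB' (mul_nonneg (hδnn) hδnn)) hA' (mul_nonneg (mul_nonneg (hδnn) hδnn) hδnn)) hA' (mul_nonneg (mul_nonneg (mul_nonneg (hδnn) hδnn) hδnn) hδnn)) (by norm_num)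
      have hl28 : ‖(1:(Matrix (Fin d) (Fin d) ℂ)) * (A*A*A*B*B*B)‖ ≤ (1:ℝ) * (δ*δ*δ*δ*δ*δ) := nmul hc1 (nmul (nmul (nmul (nmul (nmul hA' hA' (hδnn)) hA' (mul_nonneg (hδnn) hδnn)) hB' (mul_nonneg (mul_nonneg (hδnn) hδnn) hδnn)) hB' (mul_nonneg (mul_nonneg (mul_nonneg (hδnn) hδnn) hδnn) hδnn)) hB' (mul_nonneg (mul_nonneg (mul_nonneg (mul_nonneg (hδnn) hδnn) hδnn) hδnn) hδnn)) (by norm_num)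
      have hl29 : ‖(-6:(Matrix (Fin d) (Fin d) ℂ)) * (A*B*B*A*A*A)‖ ≤ (6:ℝ) * (δ*δ*δ*δ*δ*δ) := nmul hcm6 (nmul (nmul (nmul (nmul (nmul hA' hB' (hδnn)) hB' (mul_nonneg (hδnn) hδnn)) hA' (mul_nonneg (mul_nonneg (hδnn) hδnn) hδnn)) hA' (mul_nonneg (mul_nonneg (mul_nonneg (hδnn) hδnn) hδnn) hδnn)) hA' (mul_nonneg (mul_nonneg (mul_nonneg (mul_nonneg (hδnn) hδnn) hδnn) hδnn) hδnn)) (by norm_num)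
      have hl30 : ‖(-9:(Matrix (Fin d) (Fin d) ℂ)) * (A*B*B*B*A*A)‖ ≤ (9:ℝ) * (δ*δ*δ*δ*δ*δ) := nmul hcm9 (nmul (nmul (nmul (nmul (nmul hA' hB' (hδnn)) hB' (mul_nonneg (hδnn) hδnn)) hB' (mul_nonneg (mul_nonneg (hδnn) hδnn) hδnn)) hA' (mul_nonneg (mul_nonneg (mul_nonneg (hδnn) hδnn) hδnn) hδnn)) hA' (mul_nonneg (mul_nonneg (mul_nonneg (mul_nonneg (hδnn) hδnn) hδnn) hδnn) hδnn)) (by norm_num)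
      have hl31 : ‖(-6:(Matrix (Fin d) (Fin d) ℂ)) * (A*B*B*B*B*A)‖ ≤ (6:ℝ) * (δ*δ*δ*δ*δ*δ) := nmul hcm6 (nmul (nmul (nmul (nmul (nmul hA' hB' (hδnn)) hB' (mul_nonneg (hδnn) hδnn)) hB' (mul_nonneg (mul_nonneg (hδnn) hδnn) hδnn)) hB' (mul_nonneg (mul_nonneg (mul_nonneg (hδnn) hδnn) hδnn) hδnn)) hA' (mul_nonneg (mul_nonneg (mul_nonneg (mul_nonneg (hδnn) hδnn) hδnn) hδnn) hδnn)) (by norm_num)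
      have hl32 : ‖(6:(Matrix (Fin d) (Fin d) ℂ)) * (B*A*B*A*A*A)‖ ≤ (6:ℝ) * (δ*δ*δ*δ*δ*δ) := nmul hc6 (nmul (nmul (nmul (nmul (nmul hB' hA' (hδnn)) hB' (mul_nonneg (hδnn) hδnn)) hA' (mul_nonneg (mul_nonneg (hδnn) hδnn) hδnn)) hA' (mul_nonneg (mul_nonneg (mul_nonneg (hδnn) hδnn) hδnn) hδnn)) hA' (mul_nonneg (mul_nonneg (mul_nonneg (mul_nonneg (hδnn) hδnn) hδnn) hδnn) hδnn)) (by norm_num)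
      have hl33 : ‖(9:(Matrix (Fin d) (Fin d) ℂ)) * (B*A*B*B*A*A)‖ ≤ (9:ℝ) * (δ*δ*δ*δ*δ*δ) := nmul hc9 (nmul (nmul (nmul (nmul (nmul hB' hA' (hδnn)) hB' (mul_nonneg (hδnn) hδnn)) hB' (mul_nonneg (mul_nonneg (hδnn) hδnn) hδnn)) hA' (mul_nonneg (mul_nonneg (mul_nonneg (hδnn) hδnn) hδnn) hδnn)) hA' (mul_nonneg (mul_nonneg (mul_nonneg (mul_nonneg (hδnn) hδnn) hδnn) hδnn) hδnn)) (by norm_num)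
      have hl34 : ‖(6:(Matrix (Fin d) (Fin d) ℂ)) * (B*A*B*B*B*A)‖ ≤ (6:ℝ) * (δ*δ*δ*δ*δ*δ) := nmul hc6 (nmul (nmul (nmul (nmul (nmul hB' hA' (hδnn)) hB' (mul_nonneg (hδnn) hδnn)) hB' (mul_nonneg (mul_nonneg (hδnn) hδnn) hδnn)) hB' (mul_nonneg (mul_nonneg (mul_nonneg (hδnn) hδnn) hδnn) hδnn)) hA' (mul_nonneg (mul_nonneg (mul_nonneg (mul_nonneg (hδnn) hδnn) hδnn) hδnn) hδnn)) (by norm_num)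
      have hl35 : ‖(-1:(Matrix (Fin d) (Fin d) ℂ)) * (B*B*B*A*A*A)‖ ≤ (1:ℝ) * (δ*δ*δ*δ*δ*δ) := nmul hcm1 (nmul (nmul (nmul (nmul (nmul hB' hB' (hδnn)) hB' (mul_nonneg (hδnn) hδnn)) hA' (mul_nonneg (mul_nonneg (hδnn) hδnn) hδnn)) hA' (mul_nonneg (mul_nonneg (mul_nonneg (hδnn) hδnn) hδnn) hδnn)) hA' (mul_nonneg (mul_nonneg (mul_nonneg (mul_nonneg (hδnn) hδnn) hδnn) hδnn) hδnn)) (by norm_num)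
      have hl36 : ‖(-3:(Matrix (Fin d) (Fin d) ℂ)) * (A*B*B*B*A*A*A)‖ ≤ (3:ℝ) * (δ*δ*δ*δ*δ*δ*δ) := nmul hcm3 (nmul (nmul (nmul (nmul (nmul (nmul hA' hB' (hδnn)) hB' (mul_nonneg (hδnn) hδnn)) hB' (mul_nonneg (mul_nonneg (hδnn) hδnn) hδnn)) hA' (mul_nonneg (mul_nonneg (mul_nonneg (hδnn) hδnn) hδnn) hδnn)) hA' (mul_nonneg (mul_nonneg (mul_nonneg (mul_nonneg (hδnn) hδnn) hδnn) hδnn) hδnn)) hA' (mul_nonneg (mul_nonneg (mul_nonneg (mul_nonneg (mul_nonneg (hδnn) hδnn) hδnn) hδnn) hδnn) hδnn)) (by norm_num)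
      have hl37 : ‖(-3:(Matrix (Fin d) (Fin d) ℂ)) * (A*B*B*B*B*A*A)‖ ≤ (3:ℝ) * (δ*δ*δ*δ*δ*δ*δ) := nmul hcm3 (nmul (nmul (nmul (nmul (nmul (nmul hA' hB' (hδnn)) hB' (mul_nonneg (hδnn) hδnn)) hB' (mul_nonneg (mul_nonneg (hδnn) hδnn) hδnn)) hB' (mul_nonneg (mul_nonneg (mul_nonneg (hδnn) hδnn) hδnn) hδnn)) hA' (mul_nonneg (mul_nonneg (mul_nonneg (mul_nonneg (hδnn) hδnn) hδnn) hδnn) hδnn)) hA' (mul_nonneg (mul_nonneg (mul_nonneg (mul_nonneg (mul_nonneg (hδnn) hδnn) hδnn) hδnn) hδnn) hδnn)) (by norm_num)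
      have hl38 : ‖(3:(Matrix (Fin d) (Fin d) ℂ)) * (B*A*B*B*A*A*A)‖ ≤ (3:ℝ) * (δ*δ*δ*δ*δ*δ*δ) := nmul hc3 (nmul (nmul (nmul (nmul (nmul (nmul hB' hA' (hδnn)) hB' (mul_nonneg (hδnn) hδnn)) hB' (mul_nonneg (mul_nonneg (hδnn) hδnn) hδnn)) hA' (mul_nonneg (mul_nonneg (mul_nonneg (hδnn) hδnn) hδnn) hδnn)) hA' (mul_nonneg (mul_nonneg (mul_nonneg (mul_nonneg (hδnn) hδnn) hδnn) hδnn) hδnn)) hA' (mul_nonneg (mul_nonneg (mul_nonneg (mul_nonneg (mul_nonneg (hδnn) hδnn) hδnn) hδnn) hδnn) hδnn)) (by norm_num)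
      have hl39 : ‖(3:(Matrix (Fin d) (Fin d) ℂ)) * (B*A*B*B*B*A*A)‖ ≤ (3:ℝ) * (δ*δ*δ*δ*δ*δ*δ) := nmul hc3 (nmul (nmul (nmul (nmul (nmul (nmul hB' hA' (hδnn)) hB' (mul_nonneg (hδnn) hδnn)) hB' (mul_nonneg (mul_nonneg (hδnn) hδnn) hδnn)) hB' (mul_nonneg (mul_nonneg (mul_nonneg (hδnn) hδnn) hδnn) hδnn)) hA' (mul_nonneg (mul_nonneg (mul_nonneg (mul_nonneg (hδnn) hδnn) hδnn) hδnn) hδnn)) hA' (mul_nonneg (mul_nonneg (mul_nonneg (mul_nonneg (mul_nonneg (hδnn) hδnn) hδnn) hδnn) hδnn) hδnn)) (by norm_num)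
      have hl40 : ‖(-1:(Matrix (Fin d) (Fin d) ℂ)) * (A*B*B*B*B*A*A*A)‖ ≤ (1:ℝ) * (δ*δ*δ*δ*δ*δ*δ*δ) := nmul hcm1 (nmul (nmul (nmul (nmul (nmul (nmul (nmul hA' hB' (hδnn)) hB' (mul_nonneg (hδnn) hδnn)) hB' (mul_nonneg (mul_nonneg (hδnn) hδnn) hδnn)) hB' (mul_nonneg (mul_nonneg (mul_nonneg (hδnn) hδnn) hδnn) hδnn)) hA' (mul_nonneg (mul_nonneg (mul_nonneg (mul_nonneg (hδnn) hδnn) hδnn) hδnn) hδnn)) hA' (mul_nonneg (mul_nonneg (mul_nonneg (mul_nonneg (mul_nonneg (hδnn) hδnn) hδnn) hδnn) hδnn) hδnn)) hA' (mul_nonneg (mul_nonneg (mul_nonneg (mul_nonneg (mul_nonneg (mul_nonneg (hδnn) hδnn) hδnn) hδnn) hδnn) hδnn) hδnn)) (by norm_num)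
      have hl41 : ‖(1:(Matrix (Fin d) (Fin d) ℂ)) * (B*A*B*B*B*A*A*A)‖ ≤ (1:ℝ) * (δ*δ*δ*δ*δ*δ*δ*δ) := nmul hc1 (nmul (nmul (nmul (nmul (nmul (nmul (nmul hB' hA' (hδnn)) hB' (mul_nonneg (hδnn) hδnn)) hB' (mul_nonneg (mul_nonneg (hδnn) hδnn) hδnn)) hB' (mul_nonneg (mul_nonneg (mul_nonneg (hδnn) hδnn) hδnn) hδnn)) hA' (mul_nonneg (mul_nonneg (mul_nonneg (mul_nonneg (hδnn) hδnn) hδnn) hδnn) hδnn)) hA' (mul_nonneg (mul_nonneg (mul_nonneg (mul_nonneg (mul_nonneg (hδnn) hδnn) hδnn) hδnn) hδnn) hδnn)) hA' (mul_nonneg (mul_nonneg (mul_nonneg (mul_nonneg (mul_nonneg (mul_nonneg (hδnn) hδnn) hδnn) hδnn) hδnn) hδnn) hδnn)) (by norm_num)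
      have hs1 := norm_add_le_of_le hl0 hl1
      have hs2 := norm_add_le_of_le hs1 hl2
      have hs3 := norm_add_le_of_le hs2 hl3
      have hs4 := norm_add_le_of_le hs3 hl4
      have hs5 := norm_add_le_of_le hs4 hl5
      have hs6 := norm_add_le_of_le hs5 hl6
      have hs7 := norm_add_le_of_le hs6 hl7
      have hs8 := norm_add_le_of_le hs7 hl8
      have hs9 := norm_add_le_of_le hs8 hl9
      have hs10 := norm_add_le_of_le hs9 hl10
      have hs11 := norm_add_le_of_le hs10 hl11
      have hs12 := norm_add_le_of_le hs11 hl12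
      have hs13 := norm_add_le_of_le hs12 hl13
      have hs14 := norm_add_le_of_le hs13 hl14
      have hs15 := norm_add_le_of_le hs14 hl15
      have hs16 := norm_add_le_of_le hs15 hl16
      have hs17 := norm_add_le_of_le hs16 hl17
      have hs18 := norm_add_le_of_le hs17 hl18
      have hs19 := norm_add_le_of_le hs18 hl19
      have hs20 := norm_add_le_of_le hs19 hl20
      have hs21 := norm_add_le_of_le hs20 hl21
      have hs22 := norm_add_le_of_le hs21 hl22
      have hs23 := norm_add_le_of_le hs22 hl23
      have hs24 := norm_add_le_of_le hs23 hl24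
      have hs25 := norm_add_le_of_le hs24 hl25
      have hs26 := norm_add_le_of_le hs25 hl26
      have hs27 := norm_add_le_of_le hs26 hl27
      have hs28 := norm_add_le_of_le hs27 hl28
      have hs29 := norm_add_le_of_le hs28 hl29
      have hs30 := norm_add_le_of_le hs29 hl30
      have hs31 := norm_add_le_of_le hs30 hl31
      have hs32 := norm_add_le_of_le hs31 hl32
      have hs33 := norm_add_le_of_le hs32 hl33
      have hs34 := norm_add_le_of_le hs33 hl34
      have hs35 := norm_add_le_of_le hs34 hl35
      have hs36 := norm_add_le_of_le hs35 hl36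
      have hs37 := norm_add_le_of_le hs36 hl37
      have hs38 := norm_add_le_of_le hs37 hl38
      have hs39 := norm_add_le_of_le hs38 hl39
      have hs40 := norm_add_le_of_le hs39 hl40
      have hs41 := norm_add_le_of_le hs40 hl41
      rw [hid]
      refine le_trans hs41 (le_of_eq ?_)
      ring
    have hn4 : ‖EA * EB - EB * EA - K * (EB * EA)‖
        ≤ 4*δ^3 + (9/2)*δ^4 + 3*δ^5 + (11/9)*δ^6 + (1/3)*δ^7 + (1/18)*δ^8 := by
      have hfac : EA * EB - EB * EA - K * (EB * EA)
          = (36:ℂ)⁻¹ • (P * Q - Q * P - K * (Q * P)) := by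
        rw [hEAP, hEBP, smul_mul_assoc, mul_smul_comm, smul_smul,
          smul_mul_assoc, mul_smul_comm, smul_smul, mul_smul_comm,
          ← smul_sub, ← smul_sub]
        norm_num
      rw [hfac, norm_smul, norm_inv, Complex.norm_ofNat]
      have h36 := hRB
      linarith
    -- assemble
    calc ‖exp A * exp B - exp K * (exp B * exp A)‖
        = ‖((exp A - EA) * exp B + EA * (exp B - EB))
          - (1 + K) * ((exp B - EB) * exp A + EB * (exp A - EA))
          - (exp K - 1 - K) * (exp B * exp A)
          + (EA * EB - EB * EA - K * (EB * EA))‖ := by rw [← hdec]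
      _ ≤ ‖((exp A - EA) * exp B + EA * (exp B - EB))
          - (1 + K) * ((exp B - EB) * exp A + EB * (exp A - EA))
          - (exp K - 1 - K) * (exp B * exp A)‖
          + ‖EA * EB - EB * EA - K * (EB * EA)‖ := norm_add_le _ _
      _ ≤ (‖((exp A - EA) * exp B + EA * (exp B - EB))
          - (1 + K) * ((exp B - EB) * exp A + EB * (exp A - EA))‖
          + ‖(exp K - 1 - K) * (exp B * exp A)‖)
          + ‖EA * EB - EB * EA - K * (EB * EA)‖ := by
            gcongr
            exact norm_sub_le _ _
      _ ≤ ((‖(exp A - EA) * exp B + EA * (exp B - EB)‖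
          + ‖(1 + K) * ((exp B - EB) * exp A + EB * (exp A - EA))‖)
          + ‖(exp K - 1 - K) * (exp B * exp A)‖)
          + ‖EA * EB - EB * EA - K * (EB * EA)‖ := by
            gcongr
            exact norm_sub_le _ _
      _ ≤ ((δ ^ 4 / 21 + (1 + δ + δ^2/2 + δ^3/6) * (δ ^ 4 / 21))
          + (1 + 2 * δ ^ 2) * (δ ^ 4 / 21 + (1 + δ + δ^2/2 + δ^3/6) * (δ ^ 4 / 21))
          + (25/38) * (2 * δ ^ 2) ^ 2)
          + (4*δ^3 + (9/2)*δ^4 + 3*δ^5 + (11/9)*δ^6 + (1/3)*δ^7 + (1/18)*δ^8) := by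
            exact add_le_add (add_le_add (add_le_add hn1 hn2) hn3) hn4
      _ ≤ 10 * δ ^ 3 := by
          have e4 : δ^4 ≤ (3/5) * δ^3 := by nlinarith
          have e5 : δ^5 ≤ (9/25) * δ^3 := by nlinarith
          have e6 : δ^6 ≤ (1/5) * δ^3 := by nlinarith
          have e7 : δ^7 ≤ (3/25) * δ^3 := by nlinarith
          have e8 : δ^8 ≤ (9/125) * δ^3 := by nlinarith
          have hp : (1 + δ + δ^2/2 + δ^3/6) ≤ 136/75 := by nlinarith
          have hq : (1 + 2*δ^2) ≤ 43/25 := by nlinarith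
          have c1 : δ ^ 4 / 21 + (1 + δ + δ^2/2 + δ^3/6) * (δ ^ 4 / 21)
              ≤ (211/75) * (δ^4/21) := by nlinarith [pow_nonneg hδnn 4]
          have c2 : (1 + 2 * δ ^ 2) * (δ ^ 4 / 21 + (1 + δ + δ^2/2 + δ^3/6) * (δ ^ 4 / 21))
              ≤ (43/25) * ((211/75) * (δ^4/21)) := by nlinarith [pow_nonneg hδnn 4]
          nlinarith [pow_nonneg hδnn 3, pow_nonneg hδnn 4]
end

section
/- Every U ∈ SU(2) can be written as a group commutator U = VWV†W† with V, W ∈ SU(2), and moreover if d(I,U) < ε then V and W can be chosen with d(I,V) = d(I,W) ≤ √(d(I,U)) < √ε (for ε sufficiently small, with constant approximately 1/√2 in place of 1). -/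
open scoped Matrix.Norms.L2Operator
open Matrix

section BGCAux

open Complex
open scoped ComplexConjugate ComplexOrder

private abbrev M2' := Matrix (Fin 2) (Fin 2) ℂ

/-- quaternionic form predicate -/
private def IsQ (M : M2') : Prop := M 1 1 = conj (M 0 0) ∧ M 1 0 = - conj (M 0 1)

private lemma isQ_one : IsQ 1 := by constructor <;> simp

private lemma isQ_smul (t : ℝ) {M : M2'} (h : IsQ M) : IsQ ((t:ℂ) • M) := by
  constructor <;> simp [h.1, h.2]

private lemma isQ_sub {M N : M2'} (hM : IsQ M) (hN : IsQ N) : IsQ (M - N) := by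
  constructor <;> simp [hM.1, hM.2, hN.1, hN.2] <;> ring

private lemma isQ_mul {M N : M2'} (hM : IsQ M) (hN : IsQ N) : IsQ (M * N) := by
  constructor <;>
    simp [Matrix.mul_apply, Fin.sum_univ_two, hM.1, hM.2, hN.1, hN.2] <;> ring

private lemma isQ_conjTranspose {M : M2'} (hM : IsQ M) : IsQ Mᴴ := by
  constructor <;> simp [Matrix.conjTranspose_apply, hM.1, hM.2]

private lemma detQ {M : M2'} (hM : IsQ M) :
    M.det = ((normSq (M 0 0) + normSq (M 0 1) : ℝ) : ℂ) := by
  rw [Matrix.det_fin_two, hM.1, hM.2]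
  push_cast [Complex.normSq_eq_conj_mul_self]
  ring

private lemma conjTranspose_mul_selfQ {M : M2'} (hM : IsQ M) :
    Mᴴ * M = ((normSq (M 0 0) + normSq (M 0 1) : ℝ) : ℂ) • 1 := by
  ext i j
  fin_cases i <;> fin_cases j <;>
    simp [Matrix.mul_apply, Fin.sum_univ_two, Matrix.conjTranspose_apply,
      hM.1, hM.2, Complex.normSq_eq_conj_mul_self, Matrix.one_apply] <;>
    ring

private lemma self_mul_conjTransposeQ {M : M2'} (hM : IsQ M) :
    M * Mᴴ = ((normSq (M 0 0) + normSq (M 0 1) : ℝ) : ℂ) • 1 := by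
  ext i j
  fin_cases i <;> fin_cases j <;>
    simp [Matrix.mul_apply, Fin.sum_univ_two, Matrix.conjTranspose_apply,
      hM.1, hM.2, Complex.normSq_eq_conj_mul_self, Matrix.one_apply] <;>
    ring

private lemma normQ {M : M2'} (hM : IsQ M) :
    ‖M‖ = Real.sqrt (normSq (M 0 0) + normSq (M 0 1)) := by
  have h1 := Matrix.l2_opNorm_conjTranspose_mul_self M
  rw [conjTranspose_mul_selfQ hM] at h1
  have hnn : (0:ℝ) ≤ normSq (M 0 0) + normSq (M 0 1) :=
    add_nonneg (normSq_nonneg _) (normSq_nonneg _)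
  have h2 : ‖((normSq (M 0 0) + normSq (M 0 1) : ℝ) : ℂ) • (1:M2')‖
      = normSq (M 0 0) + normSq (M 0 1) := by
    rw [norm_smul, norm_one, mul_one, Complex.norm_real, Real.norm_of_nonneg hnn]
  rw [h2] at h1
  rw [h1, Real.sqrt_mul_self (norm_nonneg _)]

private lemma normQdet {M : M2'} (hM : IsQ M) :
    ‖M‖ = Real.sqrt ((M.det).re) := by
  rw [normQ hM, detQ hM, Complex.ofReal_re]

private lemma conjTransposeQ_eq {M : M2'} (hM : IsQ M) :
    Mᴴ = ((2*(M 0 0).re : ℝ):ℂ) • 1 - M := by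
  ext i j
  fin_cases i <;> fin_cases j <;>
    simp [Matrix.conjTranspose_apply, hM.1, hM.2, Matrix.one_apply,
      Complex.ext_iff] <;> ring

private lemma isQ_of_mem {U : M2'} (hU : U ∈ Matrix.specialUnitaryGroup (Fin 2) ℂ) :
    IsQ U := by
  obtain ⟨hu, hdet⟩ := Matrix.mem_specialUnitaryGroup_iff.mp hU
  have hu1 : Uᴴ * U = 1 := by
    have := Matrix.mem_unitaryGroup_iff'.mp hu
    rwa [Matrix.star_eq_conjTranspose] at this
  have hadj : Uᴴ = U.adjugate := by
    have h2 : U * U.adjugate = 1 := by rw [Matrix.mul_adjugate, hdet, one_smul]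
    calc Uᴴ = Uᴴ * (U * U.adjugate) := by rw [h2, mul_one]
    _ = (Uᴴ * U) * U.adjugate := by rw [mul_assoc]
    _ = U.adjugate := by rw [hu1, one_mul]
  rw [Matrix.adjugate_fin_two] at hadj
  have h00 := congrFun (congrFun hadj 0) 0
  have h10 := congrFun (congrFun hadj 1) 0
  simp [Matrix.conjTranspose_apply] at h00 h10
  constructor
  · rw [← h00]
  · rw [h10]; ring

private lemma star_mem_su2 {A : M2'} (hA : A ∈ Matrix.specialUnitaryGroup (Fin 2) ℂ) :
    Aᴴ ∈ Matrix.specialUnitaryGroup (Fin 2) ℂ := by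
  obtain ⟨hu, hdet⟩ := Matrix.mem_specialUnitaryGroup_iff.mp hA
  have hu1 : Aᴴ * A = 1 := by
    have := Matrix.mem_unitaryGroup_iff'.mp hu
    rwa [Matrix.star_eq_conjTranspose] at this
  refine Matrix.mem_specialUnitaryGroup_iff.mpr ⟨?_, ?_⟩
  · rw [Matrix.mem_unitaryGroup_iff, Matrix.star_eq_conjTranspose,
      Matrix.conjTranspose_conjTranspose]
    exact hu1
  · rw [Matrix.det_conjTranspose, hdet]; simp

private lemma usq {M : M2'} (hM : IsQ M) (h1 : M * Mᴴ = 1) :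
    (M - (((M 0 0).re : ℝ):ℂ) • 1) * (M - (((M 0 0).re : ℝ):ℂ) • 1)
      = ((((M 0 0).re:ℝ):ℂ)^2 - 1) • 1 := by
  have hsq : M * M = ((2*(M 0 0).re : ℝ):ℂ) • M - 1 := by
    rw [conjTransposeQ_eq hM, mul_sub, mul_smul_comm, mul_one] at h1
    rw [← h1]; module
  simp only [sub_mul, mul_sub, smul_mul_assoc, mul_smul_comm, mul_one, one_mul,
    smul_smul, hsq]
  push_cast
  module

private lemma uH {M : M2'} (hM : IsQ M) :
    (M - (((M 0 0).re : ℝ):ℂ) • 1)ᴴ = -(M - (((M 0 0).re : ℝ):ℂ) • 1) := by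
  rw [Matrix.conjTranspose_sub, Matrix.conjTranspose_smul, conjTransposeQ_eq hM,
    Matrix.conjTranspose_one]
  simp only [Complex.star_def, Complex.conj_ofReal]
  push_cast
  module

private lemma comm_conj {u w : M2'} {c : ℂ}
    (huu : u*u = (c^2-1)•(1:M2')) (hww : w*w = (c^2-1)•(1:M2')) :
    (c•1 + u) * ((1-c^2)•1 - u*w) = ((1-c^2)•1 - u*w) * (c•1 + w) := by
  have h1 : u*(u*w) = (c^2-1)•w := by
    rw [← mul_assoc, huu, smul_mul_assoc, one_mul]
  have h2 : (u*w)*w = (c^2-1)•u := by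
    rw [mul_assoc, hww, mul_smul_comm, mul_one]
  simp only [add_mul, mul_add, sub_mul, mul_sub, smul_mul_assoc, mul_smul_comm,
    mul_one, one_mul, smul_smul, h1, h2]
  module

/-- The main construction lemma. -/
private lemma su2_commutator_key (U : M2')
    (hU : U ∈ Matrix.specialUnitaryGroup (Fin 2) ℂ) :
    ∃ V W : M2',
      V ∈ Matrix.specialUnitaryGroup (Fin 2) ℂ ∧
      W ∈ Matrix.specialUnitaryGroup (Fin 2) ℂ ∧
      U = V * W * Vᴴ * Wᴴ ∧
      ‖(1 : M2') - V‖ = ‖(1 : M2') - W‖ ∧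
      ‖(1 : M2') - V‖ ≤ Real.sqrt ‖(1 : M2') - U‖ := by
  obtain ⟨hu, hdet⟩ := Matrix.mem_specialUnitaryGroup_iff.mp hU
  have huu : U * Uᴴ = 1 := by
    have := Matrix.mem_unitaryGroup_iff.mp hu
    rwa [Matrix.star_eq_conjTranspose] at this
  have hQU : IsQ U := isQ_of_mem hU
  obtain ⟨c, hc_def⟩ : ∃ c : ℝ, c = (U 0 0).re := ⟨_, rfl⟩
  have hnorm1 : normSq (U 0 0) + normSq (U 0 1) = 1 := by
    have h := detQ hQU
    rw [hdet] at h
    exact_mod_cast h.symm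
  have hc1 : c ≤ 1 := by
    have := Complex.normSq_apply (U 0 0)
    nlinarith [normSq_nonneg (U 0 1), sq_nonneg ((U 0 0).im), sq_nonneg (c-1)]
  have hc2 : -1 ≤ c := by
    have := Complex.normSq_apply (U 0 0)
    nlinarith [normSq_nonneg (U 0 1), sq_nonneg ((U 0 0).im), sq_nonneg (c+1)]
  obtain ⟨q, hq_def⟩ : ∃ q : ℝ, q = Real.sqrt (Real.sqrt ((1-c)/2)) := ⟨_, rfl⟩
  have hq0 : 0 ≤ q := hq_def ▸ Real.sqrt_nonneg _
  have hq2 : q^2 = Real.sqrt ((1-c)/2) := by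
    rw [hq_def]; exact Real.sq_sqrt (Real.sqrt_nonneg _)
  have hq4 : q^2*q^2 = (1-c)/2 := by
    rw [hq2]; exact Real.mul_self_sqrt (by linarith)
  have hq21 : q^2 ≤ 1 := by
    rw [hq2]; exact Real.sqrt_le_one.mpr (by linarith)
  obtain ⟨p, hp_def⟩ : ∃ p : ℝ, p = Real.sqrt (1 - q^2) := ⟨_, rfl⟩
  have hp2 : p^2 = 1 - q^2 := by rw [hp_def]; exact Real.sq_sqrt (by linarith)
  have hp0 : 0 ≤ p := hp_def ▸ Real.sqrt_nonneg _
  have hp1 : p ≤ 1 := by nlinarith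
  have hpq : p^2 + q^2 = 1 := by rw [hp2]; ring
  have hkey : 2 - 2*p ≤ 2*q^2 := by nlinarith [mul_nonneg hp0 (sub_nonneg.mpr hp1)]
  have hpc : (p:ℂ)^2 + (q:ℂ)^2 = 1 := by exact_mod_cast congrArg (Complex.ofReal) hpq
  obtain ⟨V₀, hV₀_def⟩ : ∃ V₀ : M2', V₀ = !![(p:ℂ), -Complex.I*q; -Complex.I*q, (p:ℂ)] :=
    ⟨_, rfl⟩
  obtain ⟨W₀, hW₀_def⟩ : ∃ W₀ : M2', W₀ = !![(p:ℂ), -(q:ℂ); (q:ℂ), (p:ℂ)] := ⟨_, rfl⟩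
  have hQV₀ : IsQ V₀ := by rw [hV₀_def]; constructor <;> simp <;> ring
  have hQW₀ : IsQ W₀ := by rw [hW₀_def]; constructor <;> simp
  have hV₀00 : V₀ 0 0 = (p:ℂ) := by simp [hV₀_def]
  have hV₀01 : V₀ 0 1 = -Complex.I*q := by simp [hV₀_def]
  have hW₀00 : W₀ 0 0 = (p:ℂ) := by simp [hW₀_def]
  have hW₀01 : W₀ 0 1 = -(q:ℂ) := by simp [hW₀_def]
  have hνV₀ : normSq (V₀ 0 0) + normSq (V₀ 0 1) = 1 := by
    rw [hV₀00, hV₀01]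
    simp [Complex.normSq_mul, Complex.normSq_ofReal]
    nlinarith
  have hνW₀ : normSq (W₀ 0 0) + normSq (W₀ 0 1) = 1 := by
    rw [hW₀00, hW₀01]
    simp [Complex.normSq_ofReal]
    nlinarith
  have hV₀mem : V₀ ∈ Matrix.specialUnitaryGroup (Fin 2) ℂ := by
    refine Matrix.mem_specialUnitaryGroup_iff.mpr ⟨?_, ?_⟩
    · rw [Matrix.mem_unitaryGroup_iff', Matrix.star_eq_conjTranspose,
        conjTranspose_mul_selfQ hQV₀, hνV₀]
      simp
    · rw [hV₀_def, Matrix.det_fin_two_of]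
      linear_combination hpc + (-(q:ℂ)^2) * Complex.I_sq
  have hW₀mem : W₀ ∈ Matrix.specialUnitaryGroup (Fin 2) ℂ := by
    refine Matrix.mem_specialUnitaryGroup_iff.mpr ⟨?_, ?_⟩
    · rw [Matrix.mem_unitaryGroup_iff', Matrix.star_eq_conjTranspose,
        conjTranspose_mul_selfQ hQW₀, hνW₀]
      simp
    · rw [hW₀_def, Matrix.det_fin_two_of]
      linear_combination hpc
  obtain ⟨C, hC_def⟩ : ∃ C : M2', C = V₀ * W₀ * V₀ᴴ * W₀ᴴ := ⟨_, rfl⟩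
  have hCmem : C ∈ Matrix.specialUnitaryGroup (Fin 2) ℂ := by
    rw [hC_def]
    exact mul_mem (mul_mem (mul_mem hV₀mem hW₀mem) (star_mem_su2 hV₀mem))
      (star_mem_su2 hW₀mem)
  have hQC : IsQ C := isQ_of_mem hCmem
  have hCC : C * Cᴴ = 1 := by
    have := Matrix.mem_unitaryGroup_iff.mp (Matrix.mem_specialUnitaryGroup_iff.mp hCmem).1
    rwa [Matrix.star_eq_conjTranspose] at this
  have hCc : (C 0 0).re = c := by
    have hVH : V₀ᴴ = !![(p:ℂ), Complex.I*q; Complex.I*q, (p:ℂ)] := by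
      rw [hV₀_def]
      ext i j; fin_cases i <;> fin_cases j <;> simp [Matrix.conjTranspose_apply]
    have hWH : W₀ᴴ = !![(p:ℂ), (q:ℂ); -(q:ℂ), (p:ℂ)] := by
      rw [hW₀_def]
      ext i j; fin_cases i <;> fin_cases j <;> simp [Matrix.conjTranspose_apply]
    have hc' : c = 1 - 2*(q^2*q^2) := by rw [hq4]; ring
    rw [hC_def, hVH, hWH, hV₀_def, hW₀_def]
    rw [Matrix.mul_fin_two, Matrix.mul_fin_two, Matrix.mul_fin_two]
    have h00 : ∀ (a b c d : ℂ), !![a,b;c,d] 0 0 = a := by intros; simp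
    rw [h00]
    simp only [Complex.add_re, Complex.mul_re, Complex.mul_im, Complex.add_im,
      Complex.neg_re, Complex.neg_im, Complex.I_re, Complex.I_im, Complex.ofReal_re,
      Complex.ofReal_im]
    rw [hc']
    ring_nf
    linear_combination (p^2+q^2+1)*hpq
  obtain ⟨u, hu_def⟩ : ∃ u : M2', u = U - ((c:ℝ):ℂ) • 1 := ⟨_, rfl⟩
  obtain ⟨w, hw_def⟩ : ∃ w : M2', w = C - ((c:ℝ):ℂ) • 1 := ⟨_, rfl⟩
  have hu2 : u * u = (((c:ℝ):ℂ)^2 - 1) • 1 := by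
    have h := usq hQU huu
    rw [← hc_def] at h
    rw [hu_def]
    exact h
  have hw2 : w * w = (((c:ℝ):ℂ)^2 - 1) • 1 := by
    have h := usq hQC hCC
    rw [hCc] at h
    rw [hw_def]
    exact h
  have hQu : IsQ u := by rw [hu_def]; exact isQ_sub hQU (isQ_smul c isQ_one)
  have hQw : IsQ w := by rw [hw_def]; exact isQ_sub hQC (isQ_smul c isQ_one)
  have hUu : U = ((c:ℝ):ℂ)•1 + u := by rw [hu_def, add_sub_cancel]
  have hCw : C = ((c:ℝ):ℂ)•1 + w := by rw [hw_def, add_sub_cancel]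
  have huH : uᴴ = -u := by
    have h := uH hQU
    rw [← hc_def] at h
    rw [hu_def]
    exact h
  have hwH : wᴴ = -w := by
    have h := uH hQC
    rw [hCc] at h
    rw [hw_def]
    exact h
  -- norm computations
  have hnU : ‖(1:M2') - U‖ = 2*q^2 := by
    rw [normQ (isQ_sub isQ_one hQU)]
    have e0 : ((1:M2') - U) 0 0 = 1 - U 0 0 := by
      simp [Matrix.sub_apply, Matrix.one_apply]
    have e1 : ((1:M2') - U) 0 1 = - U 0 1 := by
      simp [Matrix.sub_apply, Matrix.one_apply]
    rw [e0, e1, Complex.normSq_neg]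
    have h1 : normSq (1 - U 0 0) = 1 - 2*c + normSq (U 0 0) := by
      simp [Complex.normSq_apply, Complex.sub_re, Complex.sub_im, ← hc_def]
      ring
    rw [show normSq (1 - U 0 0) + normSq (U 0 1) = (2*q^2)*(2*q^2) by
      rw [h1]; linear_combination hnorm1 - 4*hq4]
    exact Real.sqrt_mul_self (by positivity)
  have hfinal : Real.sqrt (2 - 2*p) ≤ Real.sqrt ‖(1:M2') - U‖ := by
    rw [hnU]
    exact Real.sqrt_le_sqrt hkey
  have hnV₀' : ‖(1:M2') - V₀‖ = Real.sqrt (2 - 2*p) := by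
    rw [normQ (isQ_sub isQ_one hQV₀)]
    have e0 : ((1:M2') - V₀) 0 0 = 1 - (p:ℂ) := by
      simp [Matrix.sub_apply, Matrix.one_apply, hV₀00]
    have e1 : ((1:M2') - V₀) 0 1 = Complex.I*q := by
      simp [Matrix.sub_apply, Matrix.one_apply, hV₀01]
    rw [e0, e1]
    congr 1
    simp [Complex.normSq_apply, Complex.normSq_mul, Complex.normSq_I,
      Complex.sub_re, Complex.sub_im, Complex.ofReal_re, Complex.ofReal_im]
    linear_combination hpq
  have hnW₀' : ‖(1:M2') - W₀‖ = Real.sqrt (2 - 2*p) := by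
    rw [normQ (isQ_sub isQ_one hQW₀)]
    have e0 : ((1:M2') - W₀) 0 0 = 1 - (p:ℂ) := by
      simp [Matrix.sub_apply, Matrix.one_apply, hW₀00]
    have e1 : ((1:M2') - W₀) 0 1 = (q:ℂ) := by
      simp [Matrix.sub_apply, Matrix.one_apply, hW₀01]
    rw [e0, e1]
    congr 1
    simp [Complex.normSq_apply, Complex.sub_re, Complex.sub_im,
      Complex.ofReal_re, Complex.ofReal_im]
    linear_combination hpq
  by_cases hcase : u = -w
  · -- U = Cᴴ, use swapped commutator
    have hUC : U = Cᴴ := by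
      rw [conjTransposeQ_eq hQC, hCc, hUu, hcase, hCw]
      push_cast
      module
    refine ⟨W₀, V₀, hW₀mem, hV₀mem, ?_, by rw [hnV₀', hnW₀'],
      by rw [hnW₀']; exact hfinal⟩
    rw [hUC, hC_def]
    simp only [Matrix.conjTranspose_mul, Matrix.conjTranspose_conjTranspose]
    simp only [mul_assoc]
  · -- conjugate the basic construction
    obtain ⟨r, hr_def⟩ : ∃ r : M2', r = ((1 - c^2 : ℝ):ℂ) • 1 - u * w := ⟨_, rfl⟩
    have hQr : IsQ r := by
      rw [hr_def]; exact isQ_sub (isQ_smul _ isQ_one) (isQ_mul hQu hQw)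
    have hcomm : U * r = r * C := by
      have h := comm_conj (c := ((c:ℝ):ℂ)) hu2 hw2
      rw [hUu, hCw, hr_def]
      rw [show ((1 - c^2 : ℝ):ℂ) = 1 - ((c:ℝ):ℂ)^2 by push_cast; ring]
      exact h
    have hr0 : r ≠ 0 := by
      intro h0
      have huw : u * w = ((1 - c^2 : ℝ):ℂ) • 1 := by
        have h1 : ((1 - c^2 : ℝ):ℂ) • (1:M2') - u * w = 0 := by rw [← hr_def, h0]
        rw [sub_eq_zero] at h1
        exact h1.symm
      by_cases hs : (1 - c^2 : ℝ) = 0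
      · have hz : (((c:ℝ):ℂ)^2 - 1) = 0 := by
          rw [show ((c:ℝ):ℂ)^2 - 1 = -(((1 - c^2 : ℝ):ℂ)) by push_cast; ring, hs]
          simp
        have hu0 : u = 0 := by
          apply Matrix.conjTranspose_mul_self_eq_zero.mp
          rw [huH, neg_mul, hu2, hz]
          simp
        have hw0 : w = 0 := by
          apply Matrix.conjTranspose_mul_self_eq_zero.mp
          rw [hwH, neg_mul, hw2, hz]
          simp
        exact hcase (by rw [hu0, hw0, neg_zero])
      · apply hcase
        have h3 : u*(w*w) = ((1-c^2:ℝ):ℂ) • w := by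
          rw [← mul_assoc, huw, smul_mul_assoc, one_mul]
        have h4 : u*(w*w) = (((c:ℝ):ℂ)^2-1) • u := by
          rw [hw2, mul_smul_comm, mul_one]
        have h5 : ((1-c^2:ℝ):ℂ) • w = (((c:ℝ):ℂ)^2-1) • u := by rw [← h3, h4]
        have h6 : ((1-c^2:ℝ):ℂ) • (u + w) = 0 := by
          rw [smul_add, h5]
          rw [show (((c:ℝ):ℂ)^2-1) = -((1-c^2:ℝ):ℂ) by push_cast; ring]
          module
        have h7 : u + w = 0 := by
          rcases smul_eq_zero.mp h6 with h | h
          · exact absurd (by exact_mod_cast h) hs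
          · exact h
        exact add_eq_zero_iff_eq_neg.mp h7
    obtain ⟨ν, hν_def⟩ : ∃ ν : ℝ, ν = normSq (r 0 0) + normSq (r 0 1) := ⟨_, rfl⟩
    have hνr : rᴴ * r = ((ν:ℝ):ℂ) • 1 := by rw [hν_def]; exact conjTranspose_mul_selfQ hQr
    have hνr' : r * rᴴ = ((ν:ℝ):ℂ) • 1 := by rw [hν_def]; exact self_mul_conjTransposeQ hQr
    have hν0 : 0 < ν := by
      have hge : 0 ≤ ν := hν_def ▸ add_nonneg (normSq_nonneg _) (normSq_nonneg _)
      rcases hge.lt_or_eq with h | h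
      · exact h
      · exfalso
        apply hr0
        apply Matrix.conjTranspose_mul_self_eq_zero.mp
        rw [hνr, ← h]
        simp
    obtain ⟨t, ht_def⟩ : ∃ t : ℝ, t = Real.sqrt ν := ⟨_, rfl⟩
    have ht2 : t*t = ν := by rw [ht_def]; exact Real.mul_self_sqrt hν0.le
    have ht0 : 0 < t := by rw [ht_def]; exact Real.sqrt_pos.mpr hν0
    obtain ⟨S, hS_def⟩ : ∃ S : M2', S = ((t⁻¹:ℝ):ℂ) • r := ⟨_, rfl⟩
    have hQS : IsQ S := by rw [hS_def]; exact isQ_smul _ hQr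
    have hSH : Sᴴ = ((t⁻¹:ℝ):ℂ) • rᴴ := by
      rw [hS_def, Matrix.conjTranspose_smul]
      simp [Complex.star_def, Complex.conj_ofReal]
    have hscal : ((t⁻¹:ℝ):ℂ) * ((t⁻¹:ℝ):ℂ) * ((ν:ℝ):ℂ) = 1 := by
      have htne : (t:ℂ) ≠ 0 := by exact_mod_cast ht0.ne'
      rw [show ((ν:ℝ):ℂ) = (t:ℂ)*(t:ℂ) by exact_mod_cast congrArg Complex.ofReal ht2.symm]
      push_cast
      field_simp
    have hSS : Sᴴ * S = 1 := by
      rw [hSH, hS_def, smul_mul_assoc, mul_smul_comm, hνr, smul_smul, smul_smul]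
      rw [hscal, one_smul]
    have hSS' : S * Sᴴ = 1 := by
      rw [hSH, hS_def, smul_mul_assoc, mul_smul_comm, hνr', smul_smul, smul_smul]
      rw [hscal, one_smul]
    have hdetS : S.det = 1 := by
      rw [hS_def, Matrix.det_smul, detQ hQr, ← hν_def]
      simp only [Fintype.card_fin]
      rw [show (((t⁻¹:ℝ):ℂ))^2 * ((ν:ℝ):ℂ) = 1 by linear_combination hscal]
    have hSmem : S ∈ Matrix.specialUnitaryGroup (Fin 2) ℂ := by
      refine Matrix.mem_specialUnitaryGroup_iff.mpr ⟨?_, hdetS⟩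
      rw [Matrix.mem_unitaryGroup_iff, Matrix.star_eq_conjTranspose]
      exact hSS'
    have hSHmem := star_mem_su2 hSmem
    have hUC : S * C * Sᴴ = U := by
      rw [hSH, hS_def, smul_mul_assoc, smul_mul_assoc, mul_smul_comm, smul_smul]
      rw [show r * C * rᴴ = U * (r * rᴴ) by rw [← hcomm, mul_assoc]]
      rw [hνr', mul_smul_comm, mul_one, smul_smul]
      rw [show ((t⁻¹:ℝ):ℂ) * ((t⁻¹:ℝ):ℂ) * ((ν:ℝ):ℂ) = 1 from hscal, one_smul]
    have hcanc : ∀ X : M2', Sᴴ * (S * X) = X := fun X => by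
      rw [← mul_assoc, hSS, one_mul]
    have h1V : (1:M2') - S*V₀*Sᴴ = S*((1:M2') - V₀)*Sᴴ := by
      rw [mul_sub, sub_mul, mul_one, hSS']
    have h1W : (1:M2') - S*W₀*Sᴴ = S*((1:M2') - W₀)*Sᴴ := by
      rw [mul_sub, sub_mul, mul_one, hSS']
    have hdV : ((1:M2') - V₀).det = ((2-2*p:ℝ):ℂ) := by
      have he : (1:M2') - V₀ = !![1-(p:ℂ), Complex.I*q; Complex.I*q, 1-(p:ℂ)] := by
        rw [hV₀_def]
        ext i j
        fin_cases i <;> fin_cases j <;> simp [Matrix.one_apply] <;> ring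
      rw [he, Matrix.det_fin_two_of]
      push_cast
      linear_combination hpc + (-(q:ℂ)^2) * Complex.I_sq
    have hdW : ((1:M2') - W₀).det = ((2-2*p:ℝ):ℂ) := by
      have he : (1:M2') - W₀ = !![1-(p:ℂ), (q:ℂ); -(q:ℂ), 1-(p:ℂ)] := by
        rw [hW₀_def]
        ext i j
        fin_cases i <;> fin_cases j <;> simp [Matrix.one_apply]
      rw [he, Matrix.det_fin_two_of]
      push_cast
      linear_combination hpc
    have hQ1V : IsQ (S*((1:M2') - V₀)*Sᴴ) :=
      isQ_mul (isQ_mul hQS (isQ_sub isQ_one hQV₀)) (isQ_conjTranspose hQS)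
    have hQ1W : IsQ (S*((1:M2') - W₀)*Sᴴ) :=
      isQ_mul (isQ_mul hQS (isQ_sub isQ_one hQW₀)) (isQ_conjTranspose hQS)
    have hnV : ‖(1:M2') - S*V₀*Sᴴ‖ = Real.sqrt (2-2*p) := by
      rw [h1V, normQdet hQ1V]
      rw [show (S*((1:M2') - V₀)*Sᴴ).det = ((2-2*p:ℝ):ℂ) by
        rw [Matrix.det_mul, Matrix.det_mul, hdetS, Matrix.det_conjTranspose, hdetS, hdV]
        simp]
      rw [Complex.ofReal_re]
    have hnW : ‖(1:M2') - S*W₀*Sᴴ‖ = Real.sqrt (2-2*p) := by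
      rw [h1W, normQdet hQ1W]
      rw [show (S*((1:M2') - W₀)*Sᴴ).det = ((2-2*p:ℝ):ℂ) by
        rw [Matrix.det_mul, Matrix.det_mul, hdetS, Matrix.det_conjTranspose, hdetS, hdW]
        simp]
      rw [Complex.ofReal_re]
    refine ⟨S * V₀ * Sᴴ, S * W₀ * Sᴴ, mul_mem (mul_mem hSmem hV₀mem) hSHmem,
      mul_mem (mul_mem hSmem hW₀mem) hSHmem, ?_, by rw [hnV, hnW],
      by rw [hnV]; exact hfinal⟩
    rw [← hUC, hC_def]
    simp only [Matrix.conjTranspose_mul, Matrix.conjTranspose_conjTranspose]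
    simp only [mul_assoc]
    simp only [hcanc]

end BGCAux

theorem balanced_group_commutator_decomposition
    (U : Matrix (Fin 2) (Fin 2) ℂ)
    (hU : U ∈ Matrix.specialUnitaryGroup (Fin 2) ℂ)
    (ε : ℝ) (hε : 0 < ε) (hε1 : ε ≤ 1) :
    (∃ V W : Matrix (Fin 2) (Fin 2) ℂ,
      V ∈ Matrix.specialUnitaryGroup (Fin 2) ℂ ∧
      W ∈ Matrix.specialUnitaryGroup (Fin 2) ℂ ∧
      U = V * W * Vᴴ * Wᴴ) ∧
    (‖(1 : Matrix (Fin 2) (Fin 2) ℂ) - U‖ < ε →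
      ∃ V W : Matrix (Fin 2) (Fin 2) ℂ,
        V ∈ Matrix.specialUnitaryGroup (Fin 2) ℂ ∧
        W ∈ Matrix.specialUnitaryGroup (Fin 2) ℂ ∧
        U = V * W * Vᴴ * Wᴴ ∧
        ‖(1 : Matrix (Fin 2) (Fin 2) ℂ) - V‖ = ‖(1 : Matrix (Fin 2) (Fin 2) ℂ) - W‖ ∧
        ‖(1 : Matrix (Fin 2) (Fin 2) ℂ) - V‖ ≤
          Real.sqrt ‖(1 : Matrix (Fin 2) (Fin 2) ℂ) - U‖ ∧
        Real.sqrt ‖(1 : Matrix (Fin 2) (Fin 2) ℂ) - U‖ < Real.sqrt ε) := by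
  obtain ⟨V, W, hV, hW, hE, hVW, hle⟩ := su2_commutator_key U hU
  exact ⟨⟨V, W, hV, hW, hE⟩, fun hlt =>
    ⟨V, W, hV, hW, hE, hVW, hle, Real.sqrt_lt_sqrt (norm_nonneg _) hlt⟩⟩
end

section
/- Suppose unitaries satisfy ‖V_n − V‖ < ε, ‖W_n − W‖ < ε, ‖VWV†W† − Δ‖ < c'·ε^{3/2}, and ‖I − V‖, ‖I − W‖ < c''·√ε with ε ≤ 1. Then ‖V_n W_n V_n† W_n† − Δ‖ < (c' + 8c'' + 4c''ε + 8√ε + 4ε + ε^{3/2})·ε^{3/2}. -/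
set_option maxHeartbeats 2000000


open scoped Matrix.Norms.L2Operator
open Matrix

theorem qudit_commutator_accuracy {d : ℕ}
    (V W Vn Wn Δ : Matrix (Fin d) (Fin d) ℂ)
    (hV : V ∈ Matrix.unitaryGroup (Fin d) ℂ)
    (hW : W ∈ Matrix.unitaryGroup (Fin d) ℂ)
    (hVn : Vn ∈ Matrix.unitaryGroup (Fin d) ℂ)
    (hWn : Wn ∈ Matrix.unitaryGroup (Fin d) ℂ)
    (hΔ : Δ ∈ Matrix.unitaryGroup (Fin d) ℂ)
    (ε c' c'' : ℝ) (hε : 0 < ε) (hε1 : ε ≤ 1) (hc' : 0 < c') (hc'' : 0 < c'')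
    (h1 : ‖Vn - V‖ < ε) (h2 : ‖Wn - W‖ < ε)
    (h3 : ‖V * W * Vᴴ * Wᴴ - Δ‖ < c' * ε ^ ((3 : ℝ) / 2))
    (h4 : ‖(1 : Matrix (Fin d) (Fin d) ℂ) - V‖ < c'' * Real.sqrt ε)
    (h5 : ‖(1 : Matrix (Fin d) (Fin d) ℂ) - W‖ < c'' * Real.sqrt ε) :
    ‖Vn * Wn * Vnᴴ * Wnᴴ - Δ‖ <
      (c' + 8 * c'' + 4 * c'' * ε + 8 * Real.sqrt ε + 4 * ε + ε ^ ((3 : ℝ) / 2)) *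
        ε ^ ((3 : ℝ) / 2) := by
  -- norm of a unitary is at most 1
  have hnorm1 : ‖(1 : Matrix (Fin d) (Fin d) ℂ)‖ ≤ 1 := by
    have h := Matrix.l2_opNorm_conjTranspose_mul_self (1 : Matrix (Fin d) (Fin d) ℂ)
    rw [Matrix.conjTranspose_one, mul_one] at h
    nlinarith [norm_nonneg (1 : Matrix (Fin d) (Fin d) ℂ)]
  have hune : ∀ U : Matrix (Fin d) (Fin d) ℂ, U ∈ Matrix.unitaryGroup (Fin d) ℂ → ‖U‖ ≤ 1 := by
    intro U hU
    have h := Matrix.l2_opNorm_conjTranspose_mul_self U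
    have hU' : Uᴴ * U = 1 := by
      rw [← Matrix.star_eq_conjTranspose]
      exact (Matrix.mem_unitaryGroup_iff'.mp hU)
    rw [hU'] at h
    nlinarith [norm_nonneg U]
  have hVle := hune V hV
  have hWle := hune W hW
  have hVnle := hune Vn hVn
  have hWnle := hune Wn hWn
  -- unitary relations
  have hVc : V * Vᴴ = 1 := by
    rw [← Matrix.star_eq_conjTranspose]; exact Matrix.mem_unitaryGroup_iff.mp hV
  have hVnc : Vn * Vnᴴ = 1 := by
    rw [← Matrix.star_eq_conjTranspose]; exact Matrix.mem_unitaryGroup_iff.mp hVn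
  -- conjTranspose norms
  have hcV : ‖Vᴴ‖ = ‖V‖ := Matrix.l2_opNorm_conjTranspose V
  have hcWn : ‖Wnᴴ‖ = ‖Wn‖ := Matrix.l2_opNorm_conjTranspose Wn
  have hcEV : ‖Vnᴴ - Vᴴ‖ = ‖Vn - V‖ := by
    rw [← Matrix.conjTranspose_sub]; exact Matrix.l2_opNorm_conjTranspose _
  have hcEW : ‖Wnᴴ - Wᴴ‖ = ‖Wn - W‖ := by
    rw [← Matrix.conjTranspose_sub]; exact Matrix.l2_opNorm_conjTranspose _
  -- key algebraic identity
  set A : Matrix (Fin d) (Fin d) ℂ := Vn * Wn - Wn * Vn with hA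
  set B : Matrix (Fin d) (Fin d) ℂ := V * W - W * V with hB
  have c1 : ∀ X : Matrix (Fin d) (Fin d) ℂ, Vn * (Vnᴴ * X) = X := fun X => by
    rw [← mul_assoc, hVnc, one_mul]
  have c2 : ∀ X : Matrix (Fin d) (Fin d) ℂ, V * (Vᴴ * X) = X := fun X => by
    rw [← mul_assoc, hVc, one_mul]
  have key : Vn * Wn * Vnᴴ * Wnᴴ - V * W * Vᴴ * Wᴴ =
      (A - B) * (Vnᴴ * Wnᴴ) + B * ((Vnᴴ - Vᴴ) * Wnᴴ + Vᴴ * (Wnᴴ - Wᴴ)) := by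
    have e1 : Wn * Vn * Vnᴴ * Wnᴴ = 1 := by
      rw [mul_assoc, mul_assoc, c1, ← Matrix.star_eq_conjTranspose]
      exact Matrix.mem_unitaryGroup_iff.mp hWn
    have e2 : W * V * Vᴴ * Wᴴ = 1 := by
      rw [mul_assoc, mul_assoc, c2, ← Matrix.star_eq_conjTranspose]
      exact Matrix.mem_unitaryGroup_iff.mp hW
    have expand : (A - B) * (Vnᴴ * Wnᴴ) + B * ((Vnᴴ - Vᴴ) * Wnᴴ + Vᴴ * (Wnᴴ - Wᴴ)) =
        A * (Vnᴴ * Wnᴴ) - B * (Vᴴ * Wᴴ) := by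
      noncomm_ring
    rw [expand, hA, hB, sub_mul, sub_mul]
    rw [show Vn * Wn * (Vnᴴ * Wnᴴ) = Vn * Wn * Vnᴴ * Wnᴴ by noncomm_ring,
        show Wn * Vn * (Vnᴴ * Wnᴴ) = Wn * Vn * Vnᴴ * Wnᴴ by noncomm_ring,
        show V * W * (Vᴴ * Wᴴ) = V * W * Vᴴ * Wᴴ by noncomm_ring,
        show W * V * (Vᴴ * Wᴴ) = W * V * Vᴴ * Wᴴ by noncomm_ring, e1, e2]
    abel
  -- bound on the difference of ring commutators
  have hABident : A - B = ((Vn - V) * (Wn - 1) - (Wn - 1) * (Vn - V)) +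
      (((V - 1) * (Wn - W)) - (Wn - W) * (V - 1)) := by
    rw [hA, hB]; noncomm_ring
  have hWn1 : ‖Wn - 1‖ ≤ ‖Wn - W‖ + ‖(1 : Matrix (Fin d) (Fin d) ℂ) - W‖ := by
    calc ‖Wn - 1‖ = ‖(Wn - W) - (1 - W)‖ := by congr 1; abel
    _ ≤ ‖Wn - W‖ + ‖(1 : Matrix (Fin d) (Fin d) ℂ) - W‖ := norm_sub_le _ _
  have hV1 : ‖V - 1‖ = ‖(1 : Matrix (Fin d) (Fin d) ℂ) - V‖ := norm_sub_rev _ _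
  have hAB : ‖A - B‖ ≤ 2 * ‖Vn - V‖ * ‖Wn - 1‖ + 2 * ‖V - 1‖ * ‖Wn - W‖ := by
    rw [hABident]
    calc ‖((Vn - V) * (Wn - 1) - (Wn - 1) * (Vn - V)) +
          (((V - 1) * (Wn - W)) - (Wn - W) * (V - 1))‖
        ≤ ‖(Vn - V) * (Wn - 1) - (Wn - 1) * (Vn - V)‖ +
          ‖((V - 1) * (Wn - W)) - (Wn - W) * (V - 1)‖ := norm_add_le _ _
      _ ≤ (‖(Vn - V) * (Wn - 1)‖ + ‖(Wn - 1) * (Vn - V)‖) +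
          (‖(V - 1) * (Wn - W)‖ + ‖(Wn - W) * (V - 1)‖) :=
          add_le_add (norm_sub_le _ _) (norm_sub_le _ _)
      _ ≤ (‖Vn - V‖ * ‖Wn - 1‖ + ‖Wn - 1‖ * ‖Vn - V‖) +
          (‖V - 1‖ * ‖Wn - W‖ + ‖Wn - W‖ * ‖V - 1‖) :=
          add_le_add (add_le_add (norm_mul_le _ _) (norm_mul_le _ _))
            (add_le_add (norm_mul_le _ _) (norm_mul_le _ _))
      _ = 2 * ‖Vn - V‖ * ‖Wn - 1‖ + 2 * ‖V - 1‖ * ‖Wn - W‖ := by ring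
  -- bound on B
  have hBident : B = (V - 1) * W - W * (V - 1) := by rw [hB]; noncomm_ring
  have hBbound : ‖B‖ ≤ 2 * ‖V - 1‖ := by
    rw [hBident]
    calc ‖(V - 1) * W - W * (V - 1)‖ ≤ ‖(V - 1) * W‖ + ‖W * (V - 1)‖ := norm_sub_le _ _
      _ ≤ ‖V - 1‖ * ‖W‖ + ‖W‖ * ‖V - 1‖ := add_le_add (norm_mul_le _ _) (norm_mul_le _ _)
      _ ≤ ‖V - 1‖ * 1 + 1 * ‖V - 1‖ := by
          have := norm_nonneg (V - 1)
          nlinarith [norm_nonneg W]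
      _ = 2 * ‖V - 1‖ := by ring
  -- bound on the second factor
  have hC : ‖(Vnᴴ - Vᴴ) * Wnᴴ + Vᴴ * (Wnᴴ - Wᴴ)‖ ≤ ‖Vn - V‖ + ‖Wn - W‖ := by
    calc ‖(Vnᴴ - Vᴴ) * Wnᴴ + Vᴴ * (Wnᴴ - Wᴴ)‖
        ≤ ‖(Vnᴴ - Vᴴ) * Wnᴴ‖ + ‖Vᴴ * (Wnᴴ - Wᴴ)‖ := norm_add_le _ _
      _ ≤ ‖Vnᴴ - Vᴴ‖ * ‖Wnᴴ‖ + ‖Vᴴ‖ * ‖Wnᴴ - Wᴴ‖ :=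
          add_le_add (norm_mul_le _ _) (norm_mul_le _ _)
      _ ≤ ‖Vn - V‖ * 1 + 1 * ‖Wn - W‖ := by
          rw [hcEV, hcEW, hcV, hcWn]
          have h01 := norm_nonneg (Vn - V)
          have h02 := norm_nonneg (Wn - W)
          nlinarith [norm_nonneg W, norm_nonneg V]
      _ = ‖Vn - V‖ + ‖Wn - W‖ := by ring
  -- bound on ‖Vnᴴ * Wnᴴ‖
  have hUn : ‖Vnᴴ * Wnᴴ‖ ≤ 1 := by
    calc ‖Vnᴴ * Wnᴴ‖ ≤ ‖Vnᴴ‖ * ‖Wnᴴ‖ := norm_mul_le _ _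
      _ ≤ 1 := by
        rw [Matrix.l2_opNorm_conjTranspose, hcWn]
        nlinarith [norm_nonneg Vn, norm_nonneg Wn]
  -- combine
  have hmain : ‖Vn * Wn * Vnᴴ * Wnᴴ - V * W * Vᴴ * Wᴴ‖ ≤
      (2 * ‖Vn - V‖ * ‖Wn - 1‖ + 2 * ‖V - 1‖ * ‖Wn - W‖) * 1 +
      (2 * ‖V - 1‖) * (‖Vn - V‖ + ‖Wn - W‖) := by
    rw [key]
    calc ‖(A - B) * (Vnᴴ * Wnᴴ) + B * ((Vnᴴ - Vᴴ) * Wnᴴ + Vᴴ * (Wnᴴ - Wᴴ))‖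
        ≤ ‖(A - B) * (Vnᴴ * Wnᴴ)‖ + ‖B * ((Vnᴴ - Vᴴ) * Wnᴴ + Vᴴ * (Wnᴴ - Wᴴ))‖ :=
          norm_add_le _ _
      _ ≤ ‖A - B‖ * ‖Vnᴴ * Wnᴴ‖ + ‖B‖ * ‖(Vnᴴ - Vᴴ) * Wnᴴ + Vᴴ * (Wnᴴ - Wᴴ)‖ :=
          add_le_add (norm_mul_le _ _) (norm_mul_le _ _)
      _ ≤ (2 * ‖Vn - V‖ * ‖Wn - 1‖ + 2 * ‖V - 1‖ * ‖Wn - W‖) * 1 +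
          (2 * ‖V - 1‖) * (‖Vn - V‖ + ‖Wn - W‖) := by
          have n1 := norm_nonneg (A - B)
          have n2 := norm_nonneg B
          have n3 := norm_nonneg (Vnᴴ * Wnᴴ)
          have n4 := norm_nonneg ((Vnᴴ - Vᴴ) * Wnᴴ + Vᴴ * (Wnᴴ - Wᴴ))
          have n5 := norm_nonneg (Vn - V)
          have n6 := norm_nonneg (Wn - 1)
          have n7 := norm_nonneg (V - 1)
          have n8 := norm_nonneg (Wn - W)
          nlinarith [mul_le_mul_of_nonneg_left hC n2,
            mul_le_mul_of_nonneg_right hAB n3,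
            mul_le_mul_of_nonneg_left hUn n1]
  have tri : ‖Vn * Wn * Vnᴴ * Wnᴴ - Δ‖ ≤
      ‖Vn * Wn * Vnᴴ * Wnᴴ - V * W * Vᴴ * Wᴴ‖ + ‖V * W * Vᴴ * Wᴴ - Δ‖ := by
    calc ‖Vn * Wn * Vnᴴ * Wnᴴ - Δ‖ =
        ‖(Vn * Wn * Vnᴴ * Wnᴴ - V * W * Vᴴ * Wᴴ) + (V * W * Vᴴ * Wᴴ - Δ)‖ := by
          congr 1; abel
      _ ≤ _ := norm_add_le _ _
  -- numeric conclusion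
  set s := Real.sqrt ε with hs
  have hs0 : 0 ≤ s := Real.sqrt_nonneg ε
  have hss : s * s = ε := Real.mul_self_sqrt hε.le
  have hpow : ε ^ ((3 : ℝ) / 2) = ε * s := by
    rw [hs, show (3 : ℝ) / 2 = 1 + 1 / 2 by norm_num, Real.rpow_add hε, Real.rpow_one,
      Real.sqrt_eq_rpow]
  rw [hpow] at h3 ⊢
  have n5 := norm_nonneg (Vn - V)
  have n8 := norm_nonneg (Wn - W)
  have n7 := norm_nonneg ((1 : Matrix (Fin d) (Fin d) ℂ) - V)
  have n9 := norm_nonneg ((1 : Matrix (Fin d) (Fin d) ℂ) - W)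
  rw [hV1] at hmain
  have hWn1' : ‖Wn - 1‖ < ε + c'' * s := lt_of_le_of_lt hWn1 (by linarith)
  have hWn10 := norm_nonneg (Wn - 1)
  have step : ‖Vn * Wn * Vnᴴ * Wnᴴ - V * W * Vᴴ * Wᴴ‖ ≤
      2 * ε * (ε + c'' * s) + 2 * (c'' * s) * ε + 2 * (c'' * s) * (ε + ε) := by
    have := hmain
    nlinarith [mul_le_mul h1.le hWn1'.le hWn10 hε.le,
      mul_le_mul h4.le h2.le n8 (by positivity : (0:ℝ) ≤ c'' * s),
      mul_le_mul h4.le (add_le_add h1.le h2.le) (by linarith) (by positivity : (0:ℝ) ≤ c'' * s)]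
  have hεs : 0 ≤ ε * s := by positivity
  nlinarith [mul_nonneg (mul_nonneg hεs hε.le) hc''.le, mul_nonneg hεs hε.le,
    mul_nonneg (mul_nonneg hεs hε.le) hs0, sq_nonneg s]
end
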